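/- arXiv:2511.21200 — 13 statements merged into one kernel-verified Lean document; each statement's English description precedes it below -/
import Mathlib

section
/- Let R be a commutative ring with identity that is not local, and let n be a positive integer. Then a proper ideal I of R is an n-OA ideal if and only if I is a prime ideal. -/
/-- A proper ideal `I` is an `n`-OA ideal (`n`-`1`-absorbing prime) if whenever a product of
`n+1` nonunits lies in `I`, then the product of the first `n` of them lies in `I` or the last
one lies in `I`. -/
def IsNOAIdeal {R : Type*} [CommRing R] (n : ℕ) (I : Ideal R) : Prop :=
  I ≠ ⊤ ∧ ∀ a : Fin (n + 1) → R, (∀ i, ¬IsUnit (a i)) → (∏ i, a i) ∈ I →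
    (∏ i : Fin n, a i.castSucc) ∈ I ∨ a (Fin.last n) ∈ I

/-- An ideal has an `n`-OA-factorization if it is a product of finitely many `n`-OA ideals. -/
def HasNOAFactorization {R : Type*} [CommRing R] (n : ℕ) (I : Ideal R) : Prop :=
  ∃ (m : ℕ) (J : Fin m → Ideal R), 0 < m ∧ (∀ i, IsNOAIdeal n (J i)) ∧ I = ∏ i, J i

/-- A ring is an `n`-OAF ring if every proper ideal has an `n`-OA-factorization. -/
def IsNOAFRing (R : Type*) [CommRing R] (n : ℕ) : Prop :=
  ∀ I : Ideal R, I ≠ ⊤ → HasNOAFactorization n I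

/-- A general ZPI-ring: every proper ideal is a finite product of prime ideals. -/
def IsGeneralZPIRing (R : Type*) [CommRing R] : Prop :=
  ∀ I : Ideal R, I ≠ ⊤ →
    ∃ (m : ℕ) (J : Fin m → Ideal R), 0 < m ∧ (∀ i, (J i).IsPrime) ∧ I = ∏ i, J i

theorem stmt0 {R : Type*} [CommRing R] [Nontrivial R] (hnl : ¬IsLocalRing R)
    (n : ℕ) (hn : 0 < n) (I : Ideal R) (hI : I ≠ ⊤) :
    IsNOAIdeal n I ↔ I.IsPrime := by
  obtain ⟨m, rfl⟩ : ∃ m, n = m + 1 := ⟨n - 1, (Nat.succ_pred_eq_of_pos hn).symm⟩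
  constructor
  · rintro ⟨-, hoa⟩
    -- get two nonunits summing to 1
    obtain ⟨u, v, hu, hv, huv⟩ : ∃ u v : R, ¬IsUnit u ∧ ¬IsUnit v ∧ u + v = 1 := by
      by_contra h
      push_neg at h
      refine hnl { isUnit_or_isUnit_of_add_one := fun {a b} hab => ?_ }
      by_contra h2
      push_neg at h2
      exact h a b h2.1 h2.2 hab
    refine ⟨hI, fun {x y} hxy => ?_⟩
    by_cases hx : IsUnit x
    · right
      obtain ⟨w, hw⟩ := hx.exists_left_inv
      have : w * (x * y) ∈ I := I.mul_mem_left w hxy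
      rwa [← mul_assoc, hw, one_mul] at this
    by_cases hy : IsUnit y
    · left
      obtain ⟨w, hw⟩ := hy.exists_left_inv
      have : w * (x * y) ∈ I := I.mul_mem_left w hxy
      rwa [mul_comm x y, ← mul_assoc, hw, one_mul] at this
    -- key step: for any nonunit z, x * z ^ m ∈ I or y ∈ I
    have key : ∀ z : R, ¬IsUnit z → x * z ^ m ∈ I ∨ y ∈ I := by
      intro z hz
      set a : Fin (m + 1 + 1) → R :=
        fun i => if (i : ℕ) = 0 then x else if (i : ℕ) = m + 1 then y else z with ha
      have ha0 : ∀ i : Fin (m + 1), a i.castSucc = if (i : ℕ) = 0 then x else z := by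
        intro i
        simp only [ha, Fin.coe_castSucc]
        rcases eq_or_ne (i : ℕ) 0 with h | h
        · simp [h]
        · have : (i : ℕ) ≠ m + 1 := Nat.ne_of_lt i.isLt
          simp [h, this]
      have hP : (∏ i : Fin (m + 1), a i.castSucc) = x * z ^ m := by
        rw [Fin.prod_univ_succ]
        have h1 : a (0 : Fin (m + 1)).castSucc = x := by rw [ha0]; simp
        have h2 : ∀ i : Fin m, a (i.succ).castSucc = z := by
          intro i
          rw [ha0]
          simp [Fin.val_succ]
        rw [h1]
        congr 1
        rw [Finset.prod_congr rfl fun i _ => h2 i]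
        simp
      have hlast : a (Fin.last (m + 1)) = y := by simp [ha, Fin.last]
      have hnu : ∀ i, ¬IsUnit (a i) := by
        intro i
        simp only [ha]
        split
        · exact hx
        split
        · exact hy
        · exact hz
      have hprod : (∏ i, a i) ∈ I := by
        rw [Fin.prod_univ_castSucc, hP, hlast, mul_assoc, mul_comm (z ^ m) y, ← mul_assoc]
        exact I.mul_mem_right _ hxy
      rcases hoa a hnu hprod with h | h
      · left; rwa [hP] at h
      · right; rwa [hlast] at h
    rcases key u hu with hxu | h
    · rcases key v hv with hxv | h
      · -- use colon ideal and radicals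
        left
        set J : Ideal R := I.colon (Ideal.span {x}) with hJ
        have hJu : u ∈ J.radical := ⟨m, Ideal.mem_colon_span_singleton.mpr (by rwa [mul_comm] at hxu)⟩
        have hJv : v ∈ J.radical := ⟨m, Ideal.mem_colon_span_singleton.mpr (by rwa [mul_comm] at hxv)⟩
        have h1 : (1 : R) ∈ J.radical := huv ▸ J.radical.add_mem hJu hJv
        have hJtop : J = ⊤ := Ideal.radical_eq_top.mp ((Ideal.eq_top_iff_one _).mpr h1)
        have : (1 : R) ∈ J := hJtop ▸ Submodule.mem_top
        have := Ideal.mem_colon_span_singleton.mp this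
        rwa [one_mul] at this
      · exact Or.inr h
    · exact Or.inr h
  · rintro hp
    refine ⟨hI, fun a _ hprod => ?_⟩
    rw [Fin.prod_univ_castSucc] at hprod
    exact hp.mem_or_mem hprod
end

section
/- Let R be a local commutative ring with maximal ideal M, and n a positive integer. A proper ideal I of R is an n-OA ideal if and only if I is a prime ideal or M^n ⊆ I ⊆ M. -/
private lemma pow_le_of_prod_mem {R : Type*} [CommRing R] (M : Ideal R) :
    ∀ (n : ℕ) (I : Ideal R), (∀ m : Fin n → R, (∀ i, m i ∈ M) → ∏ i, m i ∈ I) → M ^ n ≤ I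
  | 0, I, h => by
      have h1 : (1 : R) ∈ I := by simpa using h (fun _ => 1) (fun i => i.elim0)
      simp [(Ideal.eq_top_iff_one I).2 h1]
  | (k+1), I, h => by
      rw [pow_succ']
      refine Ideal.mul_le.2 fun a ha b hb => ?_
      have key := pow_le_of_prod_mem M k (I.colon (Ideal.span {a})) (fun m hm => by
        rw [Ideal.mem_colon_span_singleton]
        have h2 := h (Fin.cons a m) (fun i => by
          refine Fin.cases ?_ ?_ i <;> simp [ha, hm])
        rw [Fin.prod_cons] at h2
        rwa [mul_comm])
      have hb' := key hb
      rw [Ideal.mem_colon_span_singleton] at hb'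
      rwa [mul_comm] at hb'

theorem stmt1 {R : Type*} [CommRing R] [IsLocalRing R] (n : ℕ) (hn : 0 < n)
    (I : Ideal R) (hI : I ≠ ⊤) :
    IsNOAIdeal n I ↔
      (I.IsPrime ∨ ((IsLocalRing.maximalIdeal R) ^ n ≤ I ∧ I ≤ IsLocalRing.maximalIdeal R)) := by
  constructor
  · rintro ⟨-, hOA⟩
    by_cases hp : I.IsPrime
    · exact Or.inl hp
    · right
      refine ⟨?_, IsLocalRing.le_maximalIdeal hI⟩
      have hnp : ¬(∀ x y : R, x * y ∈ I → x ∈ I ∨ y ∈ I) :=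
        fun h' => hp ⟨hI, fun {x y} => h' x y⟩
      push_neg at hnp
      obtain ⟨x, y, hxy, hx, hy⟩ := hnp
      have hxu : ¬IsUnit x := by
        rintro ⟨u, rfl⟩
        exact hy (by simpa using I.mul_mem_left (↑u⁻¹) hxy)
      have hyu : ¬IsUnit y := by
        rintro ⟨u, rfl⟩
        exact hx (by simpa [mul_comm, mul_assoc, mul_left_comm] using
          I.mul_mem_left (↑u⁻¹) hxy)
      obtain ⟨k, rfl⟩ : ∃ k, n = k + 1 := ⟨n - 1, (Nat.succ_pred_eq_of_pos hn).symm⟩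
      -- key claim: every product of n nonunits is in I
      have key : ∀ m : Fin (k+1) → R, (∀ i, ¬IsUnit (m i)) → ∏ i, m i ∈ I := by
        intro m hm
        -- step 1
        have huse1 := hOA (Fin.snoc (Fin.snoc (fun i : Fin k => m i.castSucc) x) y)
          (fun i => by
            refine Fin.lastCases ?_ (fun j => ?_) i
            · simpa using hyu
            · rw [Fin.snoc_castSucc]
              refine Fin.lastCases ?_ (fun l => ?_) j
              · simpa using hxu
              · rw [Fin.snoc_castSucc]
                exact hm _)
          (by
            rw [Fin.prod_snoc, Fin.prod_snoc, mul_assoc]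
            exact I.mul_mem_left _ hxy)
        rcases huse1 with h1 | h1
        swap
        · rw [Fin.snoc_last] at h1; exact absurd h1 hy
        · simp only [Fin.snoc_castSucc] at h1
          -- h1 : ∏ i : Fin (k+1), (Fin.snoc (fun i : Fin k => m i.castSucc) x) i ∈ I
          rw [Fin.prod_snoc] at h1
          -- h1 : (∏ i : Fin k, m i.castSucc) * x ∈ I
          -- step 2
          have huse2 := hOA (Fin.snoc m x)
            (fun i => by
              refine Fin.lastCases ?_ (fun j => ?_) i
              · simpa using hxu
              · rw [Fin.snoc_castSucc]; exact hm _)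
            (by
              rw [Fin.prod_snoc, Fin.prod_univ_castSucc (f := m)]
              have : (∏ i : Fin k, m i.castSucc) * m (Fin.last k) * x
                  = ((∏ i : Fin k, m i.castSucc) * x) * m (Fin.last k) := by ring
              rw [this]
              exact I.mul_mem_right _ h1)
          rcases huse2 with h2 | h2
          · simpa only [Fin.snoc_castSucc] using h2
          · rw [Fin.snoc_last] at h2; exact absurd h2 hx
      refine pow_le_of_prod_mem _ _ _ (fun m hm => key m (fun i => ?_))
      exact (IsLocalRing.mem_maximalIdeal _).1 (hm i)
  · rintro (hp | ⟨hMn, -⟩)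
    · refine ⟨hI, fun a ha hprod => ?_⟩
      rw [Fin.prod_univ_castSucc] at hprod
      exact hp.mem_or_mem hprod
    · refine ⟨hI, fun a ha hprod => ?_⟩
      left
      refine hMn ?_
      have : (∏ i : Fin n, a i.castSucc) ∈ ∏ _i : Fin n, IsLocalRing.maximalIdeal R :=
        Ideal.prod_mem_prod (fun i _ => (IsLocalRing.mem_maximalIdeal _).2 (ha _))
      simpa using this
end

section
/- If I is an n-OA ideal of a commutative ring R, then I has exactly one minimal prime, i.e., the set of prime ideals of R minimal over I is a singleton. -/
/-- Key step: for an `n`-OA ideal, `x*y ∈ I` with `x, y` nonunits forces `x^n ∈ I` or `y ∈ I`. -/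
lemma nOA_key {R : Type*} [CommRing R] {n : ℕ} (hn : 0 < n) {I : Ideal R}
    (hI : IsNOAIdeal n I) {x y : R} (hx : ¬IsUnit x) (hy : ¬IsUnit y)
    (hxy : x * y ∈ I) : x ^ n ∈ I ∨ y ∈ I := by
  obtain ⟨m, rfl⟩ : ∃ m, n = m + 1 := ⟨n - 1, (Nat.succ_pred_eq_of_pos hn).symm⟩
  set a : Fin (m + 1 + 1) → R := fun i => if i = Fin.last (m + 1) then y else x with ha
  have h1 : ∀ i : Fin (m + 1), a i.castSucc = x := by
    intro i
    simp [ha, (Fin.castSucc_lt_last i).ne]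
  have h2 : (∏ i : Fin (m + 1), a i.castSucc) = x ^ (m + 1) := by
    rw [Finset.prod_congr rfl fun i _ => h1 i, Finset.prod_const, Finset.card_univ,
      Fintype.card_fin]
  have hprod : (∏ i, a i) = x ^ (m + 1) * y := by
    rw [Fin.prod_univ_castSucc, h2]
    simp [ha]
  have hmem : (∏ i, a i) ∈ I := by
    rw [hprod, pow_succ, mul_assoc]
    exact I.mul_mem_left _ hxy
  have hnon : ∀ i, ¬IsUnit (a i) := by
    intro i
    by_cases h : i = Fin.last (m + 1) <;> simp [ha, h, hx, hy]
  rcases hI.2 a hnon hmem with h | h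
  · left
    rwa [h2] at h
  · right; simpa [ha] using h

lemma nOA_radical_prime {R : Type*} [CommRing R] {n : ℕ} (hn : 0 < n) {I : Ideal R}
    (hI : IsNOAIdeal n I) : I.radical.IsPrime := by
  constructor
  · intro h
    have : (1 : R) ∈ I.radical := h ▸ Submodule.mem_top
    obtain ⟨k, hk⟩ := this
    simp only [one_pow] at hk
    exact hI.1 (Ideal.eq_top_iff_one I |>.mpr hk)
  · intro x y hxy
    by_cases hx : IsUnit x
    · right
      rwa [Ideal.unit_mul_mem_iff_mem _ hx] at hxy
    by_cases hy : IsUnit y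
    · left
      rw [mul_comm] at hxy
      rwa [Ideal.unit_mul_mem_iff_mem _ hy] at hxy
    obtain ⟨k, hk⟩ := hxy
    rcases Nat.eq_zero_or_pos k with rfl | hk0
    · simp only [pow_zero] at hk
      exact absurd (Ideal.eq_top_iff_one I |>.mpr hk) hI.1
    have hxk : ¬IsUnit (x ^ k) := fun h => hx ((isUnit_pow_iff hk0.ne').mp h)
    have hyk : ¬IsUnit (y ^ k) := fun h => hy ((isUnit_pow_iff hk0.ne').mp h)
    rw [mul_pow] at hk
    rcases nOA_key hn hI hxk hyk hk with h | h
    · left; exact ⟨k * n, by rwa [pow_mul]⟩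
    · right; exact ⟨k, h⟩

theorem stmt2 {R : Type*} [CommRing R] [Nontrivial R] (n : ℕ) (hn : 0 < n)
    (I : Ideal R) (hI : IsNOAIdeal n I) :
    ∃ P : Ideal R, I.minimalPrimes = {P} := by
  have hrad := nOA_radical_prime hn hI
  refine ⟨I.radical, ?_⟩
  ext P
  simp only [Set.mem_singleton_iff, Ideal.minimalPrimes, Set.mem_setOf_eq]
  constructor
  · rintro ⟨⟨hP, hIP⟩, hmin⟩
    have h1 : I.radical ≤ P := hP.radical_le_iff.mpr hIP
    have h2 : P ≤ I.radical := hmin ⟨hrad, Ideal.le_radical⟩ h1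
    exact le_antisymm h2 h1
  · rintro rfl
    exact ⟨⟨hrad, Ideal.le_radical⟩, fun q ⟨hq, hIq⟩ _ => hq.radical_le_iff.mpr hIq⟩
end

section
/- If a proper ideal I of a commutative ring R can be written as a product of finitely many n-OA ideals, then the set of prime ideals minimal over I is finite. -/
lemma key_noa {R : Type*} [CommRing R] {n : ℕ} (hn : 0 < n) {J : Ideal R}
    (h : IsNOAIdeal n J) {a b : R} (hab : a * b ∈ J) : a ∈ J.radical ∨ b ∈ J := by
  by_cases ha : IsUnit a
  · right
    obtain ⟨c, hc⟩ := ha.exists_left_inv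
    have : c * (a * b) ∈ J := Ideal.mul_mem_left _ _ hab
    rwa [← mul_assoc, hc, one_mul] at this
  by_cases hb : IsUnit b
  · left
    obtain ⟨c, hc⟩ := hb.exists_left_inv
    have : (a * b) * c ∈ J := Ideal.mul_mem_right _ _ hab
    rw [mul_assoc, mul_comm b c, hc, mul_one] at this
    exact Ideal.le_radical this
  · set f : Fin (n + 1) → R := Fin.snoc (fun _ => a) b with hf
    have hprod : (∏ i, f i) = a ^ n * b := by
      rw [Fin.prod_univ_castSucc]
      simp [hf, Fin.snoc_castSucc, Fin.snoc_last]
    have hmem : (∏ i, f i) ∈ J := by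
      rw [hprod]
      obtain ⟨k, rfl⟩ := Nat.exists_eq_succ_of_ne_zero hn.ne'
      rw [pow_succ, mul_assoc]
      exact Ideal.mul_mem_left _ _ hab
    have hnu : ∀ i, ¬IsUnit (f i) := by
      intro i
      induction i using Fin.lastCases with
      | last => simpa [hf] using hb
      | cast i => simpa [hf] using ha
    rcases h.2 f hnu hmem with h1 | h1
    · left
      refine ⟨n, ?_⟩
      simpa [hf] using h1
    · right
      simpa [hf] using h1

lemma radical_prime_of_noa {R : Type*} [CommRing R] {n : ℕ} (hn : 0 < n) {J : Ideal R}
    (h : IsNOAIdeal n J) : (J.radical).IsPrime := by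
  constructor
  · exact fun ht => h.1 (by rwa [Ideal.radical_eq_top] at ht)
  · intro a b hab
    obtain ⟨k, hk⟩ := hab
    rw [mul_pow] at hk
    rcases key_noa hn h hk with h1 | h1
    · exact Or.inl (Ideal.mem_radical_of_pow_mem h1)
    · exact Or.inr (Ideal.mem_radical_of_pow_mem (Ideal.le_radical h1))

theorem stmt3 {R : Type*} [CommRing R] [Nontrivial R] (n : ℕ) (hn : 0 < n)
    (I : Ideal R) (hI : I ≠ ⊤) (h : HasNOAFactorization n I) :
    I.minimalPrimes.Finite := by
  obtain ⟨m, J, hm, hJ, rfl⟩ := h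
  apply Set.Finite.subset (Set.finite_range fun i => (J i).radical)
  intro p hp
  obtain ⟨⟨hprime, hle⟩, hmin⟩ := hp
  obtain ⟨i, -, hi⟩ := (Ideal.IsPrime.prod_le hprime).mp hle
  have hIle : (∏ i, J i) ≤ (J i).radical :=
    le_trans (le_trans Ideal.prod_le_inf (Finset.inf_le (Finset.mem_univ i))) Ideal.le_radical
  have hradle : (J i).radical ≤ p := hprime.radical_le_iff.mpr hi
  have := hmin ⟨radical_prime_of_noa hn (hJ i), hIle⟩ hradle
  exact ⟨i, le_antisymm hradle this⟩
end

section
/- Let R be a local commutative ring such that every proper principal ideal of R has an n-OA-factorization. Then every nonmaximal minimal prime ideal of R is a principal ideal. -/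
/-- In any tuple built with `Fin.snoc` from nonunits, every entry is a nonunit. -/
theorem noa_snoc_nonunit {R : Type*} [CommRing R] {m : ℕ} {f : Fin m → R} {x : R}
    (hf : ∀ i, ¬IsUnit (f i)) (hx : ¬IsUnit x) :
    ∀ i, ¬IsUnit ((Fin.snoc f x : Fin (m + 1) → R) i) := by
  intro i
  refine Fin.lastCases ?_ ?_ i
  · simpa using hx
  · intro j; simpa using hf j

/-- An `(k+1)`-OA ideal not containing `y ^ (k+1)` for some nonunit `y` is prime. -/
theorem noa_prime {R : Type*} [CommRing R] {k : ℕ} {J : Ideal R}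
    (hJ : IsNOAIdeal (k + 1) J) {y : R} (hy : ¬IsUnit y) (hyn : y ^ (k + 1) ∉ J) :
    J.IsPrime := by
  refine ⟨hJ.1, ?_⟩
  intro a b hab
  by_cases ha : IsUnit a
  · right
    obtain ⟨u, rfl⟩ := ha
    have := J.mul_mem_left (↑u⁻¹) hab
    simpa [← mul_assoc] using this
  by_cases hb : IsUnit b
  · left
    obtain ⟨u, rfl⟩ := hb
    have := J.mul_mem_left (↑u⁻¹) hab
    rw [mul_comm a (↑u), ← mul_assoc] at this
    simpa using this
  by_contra hcon
  push_neg at hcon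
  obtain ⟨haJ, hbJ⟩ := hcon
  -- tuple 1 : (y,...,y,a,b) of length k+2
  have h1 := hJ.2 (Fin.snoc (Fin.snoc (fun _ : Fin k => y) a) b)
    (noa_snoc_nonunit (noa_snoc_nonunit (fun _ => hy) ha) hb)
    (by
      simp only [Fin.prod_snoc, Fin.prod_const]
      rw [mul_assoc]
      exact J.mul_mem_left _ hab)
  simp only [Fin.snoc_castSucc, Fin.snoc_last, Fin.prod_snoc, Fin.prod_const] at h1
  have hya : y ^ k * a ∈ J := h1.resolve_right hbJ
  -- tuple 2 : (y,...,y,a) of length k+2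
  have h2 := hJ.2 (Fin.snoc (fun _ : Fin (k + 1) => y) a)
    (noa_snoc_nonunit (fun _ => hy) ha)
    (by
      simp only [Fin.prod_snoc, Fin.prod_const]
      rw [pow_succ, mul_comm (y ^ k) y, mul_assoc]
      exact J.mul_mem_left _ hya)
  simp only [Fin.snoc_castSucc, Fin.snoc_last, Fin.prod_const] at h2
  exact h2.elim hyn haJ

theorem stmt4 {R : Type*} [CommRing R] [IsLocalRing R] (n : ℕ) (hn : 0 < n)
    (h : ∀ x : R, Ideal.span {x} ≠ ⊤ → HasNOAFactorization n (Ideal.span {x}))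
    (P : Ideal R) (hP : P ∈ minimalPrimes R) (hPm : P ≠ IsLocalRing.maximalIdeal R) :
    Submodule.IsPrincipal P := by
  classical
  obtain ⟨k, rfl⟩ : ∃ k, n = k + 1 := ⟨n - 1, (Nat.succ_pred_eq_of_pos hn).symm⟩
  have hPp : P.IsPrime := hP.1.1
  have hPle : P ≤ IsLocalRing.maximalIdeal R := IsLocalRing.le_maximalIdeal hPp.ne_top
  obtain ⟨y, hyM, hyP⟩ := SetLike.exists_of_lt (lt_of_le_of_ne hPle hPm)
  have hyu : ¬IsUnit y := hyM
  have hynP : y ^ (k + 1) ∉ P := fun hc => hyP ((hPp.pow_mem_iff_mem _ (Nat.succ_pos k)).1 hc)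
  -- every principal ideal generated by an element of P has P as a factor
  have key : ∀ x ∈ P, ∃ K : Ideal R, Ideal.span {x} = P * K := by
    intro x hx
    have hle : Ideal.span {x} ≤ P := Ideal.span_le.2 (by simpa using hx)
    have hspan : Ideal.span {x} ≠ ⊤ := fun ht => hPp.ne_top (top_le_iff.1 (ht ▸ hle))
    obtain ⟨m, Jf, hm, hJoa, hprod⟩ := h x hspan
    have hprodle : (∏ i, Jf i) ≤ P := hprod ▸ hle
    obtain ⟨i₀, -, hi₀⟩ := (hPp.prod_le).1 hprodle
    have hprime : (Jf i₀).IsPrime :=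
      noa_prime (hJoa i₀) hyu (fun hc => hynP (hi₀ hc))
    have hPJ : P = Jf i₀ := le_antisymm (hP.2 ⟨hprime, bot_le⟩ hi₀) hi₀
    refine ⟨∏ i ∈ Finset.univ.erase i₀, Jf i, ?_⟩
    rw [hprod, ← Finset.mul_prod_erase Finset.univ Jf (Finset.mem_univ i₀), ← hPJ]
  by_cases hc : ∃ x ∈ P, ∃ K : Ideal R, Ideal.span {x} = P * K ∧ K = ⊤
  · obtain ⟨x, -, K, heq, rfl⟩ := hc
    have hPx : Ideal.span {x} = P := by rw [heq, Ideal.mul_top]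
    exact ⟨⟨x, hPx.symm⟩⟩
  · push_neg at hc
    have hPeq : P * IsLocalRing.maximalIdeal R = P := by
      refine le_antisymm Ideal.mul_le_left (fun x hx => ?_)
      obtain ⟨K, hK⟩ := key x hx
      have hKM : K ≤ IsLocalRing.maximalIdeal R :=
        IsLocalRing.le_maximalIdeal (hc x hx K hK)
      have hsub : Ideal.span {x} ≤ P * IsLocalRing.maximalIdeal R :=
        hK ▸ Ideal.mul_mono_right hKM
      exact hsub (Ideal.mem_span_singleton_self x)
    have hbot : P = ⊥ := by
      refine le_antisymm (fun x hx => ?_) bot_le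
      obtain ⟨K, hK⟩ := key x hx
      have h1 : Ideal.span {x} = IsLocalRing.maximalIdeal R * Ideal.span {x} := by
        conv_lhs => rw [hK]
        rw [hK, ← mul_assoc, mul_comm (IsLocalRing.maximalIdeal R) P, hPeq]
      have hx2 : x ∈ IsLocalRing.maximalIdeal R • Ideal.span {x} := by
        rw [Ideal.smul_eq_mul, ← h1]
        exact Ideal.mem_span_singleton_self x
      obtain ⟨a, haM, hax⟩ := Submodule.mem_smul_span_singleton.1 hx2
      have hzero : (1 - a) * x = 0 := by
        have : a * x = x := hax
        rw [sub_mul, one_mul, this, sub_self]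
      obtain ⟨u, hu⟩ := IsLocalRing.isUnit_one_sub_self_of_mem_nonunits a haM
      have : x = 0 := by
        calc x = ↑u⁻¹ * (↑u * x) := by rw [← mul_assoc, Units.inv_mul, one_mul]
        _ = ↑u⁻¹ * ((1 - a) * x) := by rw [hu]
        _ = 0 := by rw [hzero, mul_zero]
      simpa using this
    rw [hbot]
    exact ⟨⟨0, (Submodule.span_zero_singleton R).symm⟩⟩
end

section
/- Let R be a local commutative ring with maximal ideal M and nilradical Nil(R). If every proper principal ideal of R has an n-OA-factorization, then every proper principal ideal of R/Nil(R) has an n-OA-factorization. -/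
lemma oa_snoc {R : Type*} [CommRing R] {n : ℕ} {I : Ideal R} (hI : IsNOAIdeal n I)
    {g : Fin n → R} {x : R} (hg : ∀ i, ¬IsUnit (g i)) (hx : ¬IsUnit x)
    (hmem : (∏ i, g i) * x ∈ I) : (∏ i, g i) ∈ I ∨ x ∈ I := by
  have h := hI.2 (Fin.snoc g x) ?_ ?_
  · simpa [Fin.snoc_castSucc, Fin.snoc_last] using h
  · intro i
    refine Fin.lastCases ?_ ?_ i
    · simpa [Fin.snoc_last] using hx
    · intro j; simpa [Fin.snoc_castSucc] using hg j
  · simpa [Fin.prod_snoc] using hmem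

/-- If `I` is `n`-OA and some product of `n` nonunits lies outside `I`, then `I` is prime. -/
lemma isPrime_of_nOA {R : Type*} [CommRing R] {n : ℕ} (hn : 0 < n) {I : Ideal R}
    (hI : IsNOAIdeal n I) {c : Fin n → R} (hc : ∀ i, ¬IsUnit (c i)) (hcI : (∏ i, c i) ∉ I) :
    I.IsPrime := by
  obtain ⟨m, rfl⟩ : ∃ m, n = m + 1 := ⟨n - 1, (Nat.succ_pred_eq_of_pos hn).symm⟩
  refine ⟨hI.1, ?_⟩
  intro a b hab
  by_cases ha : IsUnit a
  · right
    have : b = ↑ha.unit⁻¹ * (a * b) := by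
      rw [← mul_assoc, IsUnit.val_inv_mul, one_mul]
    rw [this]; exact I.mul_mem_left _ hab
  by_cases hb : IsUnit b
  · left
    have : a = ↑hb.unit⁻¹ * (a * b) := by
      rw [mul_comm a b, ← mul_assoc, IsUnit.val_inv_mul, one_mul]
    rw [this]; exact I.mul_mem_left _ hab
  -- both nonunits
  set c' : Fin m → R := fun i => c i.castSucc with hc'
  have step1 : (∏ i, (Fin.cons a c' : Fin (m+1) → R) i) ∈ I ∨ b ∈ I := by
    apply oa_snoc hI ?_ hb
    · rw [Fin.prod_cons]
      have : a * (∏ i, c' i) * b = (∏ i, c' i) * (a * b) := by ring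
      rw [this]; exact I.mul_mem_left _ hab
    · intro i
      refine Fin.cases ?_ ?_ i
      · simpa using ha
      · intro j; simpa [hc'] using hc j.castSucc
  rcases step1 with hd | hbI
  · -- a * ∏ c' ∈ I ; now use tuple c with last element a
    rw [Fin.prod_cons] at hd
    have step2 : (∏ i, c i) ∈ I ∨ a ∈ I := by
      apply oa_snoc hI hc ha
      have : (∏ i, c i) * a = c (Fin.last m) * (a * ∏ i, c' i) := by
        rw [Fin.prod_univ_castSucc]; ring
      rw [this]; exact I.mul_mem_left _ hd
    rcases step2 with h1 | h2
    · exact absurd h1 hcI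
    · exact Or.inl h2
  · exact Or.inr hbI

/-- In a local ring, `I` `n`-OA implies `I ⊔ nilradical R` is `n`-OA. -/
lemma sup_nilradical_nOA {R : Type*} [CommRing R] [IsLocalRing R] {n : ℕ} (hn : 0 < n)
    {I : Ideal R} (hI : IsNOAIdeal n I) : IsNOAIdeal n (I ⊔ nilradical R) := by
  have hne : I ⊔ nilradical R ≠ ⊤ := by
    intro htop
    have hle : I ⊔ nilradical R ≤ IsLocalRing.maximalIdeal R :=
      sup_le (IsLocalRing.le_maximalIdeal hI.1)
        (nilradical_le_prime (IsLocalRing.maximalIdeal R))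
    rw [htop] at hle
    exact (IsLocalRing.maximalIdeal.isMaximal R).ne_top (top_le_iff.mp hle)
  by_cases hP : ∀ c : Fin n → R, (∀ i, ¬IsUnit (c i)) → (∏ i, c i) ∈ I
  · refine ⟨hne, fun a ha _ => Or.inl ?_⟩
    exact Ideal.mem_sup_left (hP _ (fun i => ha i.castSucc))
  · push_neg at hP
    obtain ⟨c, hc, hcI⟩ := hP
    have hprime := isPrime_of_nOA hn hI hc hcI
    have : I ⊔ nilradical R = I := by
      rw [sup_eq_left]; exact nilradical_le_prime I
    rw [this]; exact hI

/-- The image in `R ⧸ nilradical R` of an `n`-OA ideal of a local ring is `n`-OA. -/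
lemma map_nOA {R : Type*} [CommRing R] [IsLocalRing R] {n : ℕ} (hn : 0 < n)
    {J : Ideal R} (hJ : IsNOAIdeal n J) :
    IsNOAIdeal n (Ideal.map (Ideal.Quotient.mk (nilradical R)) J) := by
  set π := Ideal.Quotient.mk (nilradical R) with hπ
  have hsurj : Function.Surjective π := Ideal.Quotient.mk_surjective
  have hcm : Ideal.comap π (Ideal.map π J) = J ⊔ nilradical R := by
    rw [Ideal.comap_map_of_surjective π hsurj, ← RingHom.ker_eq_comap_bot, Ideal.mk_ker]
  have hJ' := sup_nilradical_nOA hn hJ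
  constructor
  · intro htop
    apply hJ'.1
    rw [← hcm, htop, Ideal.comap_top]
  · intro a ha hmem
    choose b hb using fun i => hsurj (a i)
    have hbnu : ∀ i, ¬IsUnit (b i) := by
      intro i hu
      exact ha i (hb i ▸ hu.map π)
    have hbmem : (∏ i, b i) ∈ J ⊔ nilradical R := by
      rw [← hcm]
      show π (∏ i, b i) ∈ Ideal.map π J
      rw [map_prod]
      simpa [hb] using hmem
    have push : ∀ x : R, x ∈ J ⊔ nilradical R → π x ∈ Ideal.map π J := by
      intro x hx
      have : π x ∈ Ideal.map π (J ⊔ nilradical R) := Ideal.mem_map_of_mem π hx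
      rwa [Ideal.map_sup, Ideal.map_quotient_self, sup_bot_eq] at this
    rcases hJ'.2 b hbnu hbmem with h1 | h2
    · left
      have := push _ h1
      rw [map_prod] at this
      simpa [hb] using this
    · right
      have := push _ h2
      rwa [hb] at this

theorem stmt5 {R : Type*} [CommRing R] [IsLocalRing R] (n : ℕ) (hn : 0 < n)
    (h : ∀ x : R, Ideal.span {x} ≠ ⊤ → HasNOAFactorization n (Ideal.span {x})) :
    ∀ y : R ⧸ nilradical R, Ideal.span {y} ≠ ⊤ → HasNOAFactorization n (Ideal.span {y}) := by
  intro y hy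
  set π := Ideal.Quotient.mk (nilradical R) with hπ
  obtain ⟨x, rfl⟩ : ∃ x : R, π x = y := Ideal.Quotient.mk_surjective y
  have hx : Ideal.span {x} ≠ ⊤ := by
    intro htop
    apply hy
    rw [Ideal.span_singleton_eq_top] at htop ⊢
    exact htop.map π
  obtain ⟨m, J, hm, hJ, hEq⟩ := h x hx
  refine ⟨m, fun i => Ideal.map π (J i), hm, fun i => map_nOA hn (hJ i), ?_⟩
  have hmap : ∀ s : Finset (Fin m),
      Ideal.map π (∏ i ∈ s, J i) = ∏ i ∈ s, Ideal.map π (J i) := by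
    intro s
    induction s using Finset.induction with
    | empty => simp [Ideal.map_top]
    | insert _ _ hns ih =>
      rw [Finset.prod_insert hns, Finset.prod_insert hns, Ideal.map_mul, ih]
  calc Ideal.span {π x} = Ideal.map π (Ideal.span {x}) := by
        rw [Ideal.map_span, Set.image_singleton]
    _ = ∏ i, Ideal.map π (J i) := by rw [hEq, hmap]
end

section
/- Let R be a local commutative ring with maximal ideal M such that every proper principal ideal of R has an n-OA-factorization and the Krull dimension of R equals 1. Then R is an integral domain. -/
open Ideal IsLocalRing Finset

section Aux

variable {R : Type*} [CommRing R] [IsLocalRing R]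

private lemma memM_of_not_unit {x : R} (h : ¬IsUnit x) : x ∈ maximalIdeal R := by
  rwa [mem_maximalIdeal, mem_nonunits_iff]

private lemma not_unit_of_memM {x : R} (h : x ∈ maximalIdeal R) : ¬IsUnit x := by
  rwa [mem_maximalIdeal, mem_nonunits_iff] at h

private lemma unit_one_sub {x : R} (h : x ∈ maximalIdeal R) : IsUnit (1 - x) := by
  by_contra hc
  have h1 : (1 - x) ∈ maximalIdeal R := memM_of_not_unit hc
  have h2 : (1 : R) ∈ maximalIdeal R := by
    have := (maximalIdeal R).add_mem h1 h
    simpa using this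
  exact (maximalIdeal.isMaximal R).ne_top ((Ideal.eq_top_iff_one _).mpr h2)

private lemma span_ne_top' {x : R} (h : x ∈ maximalIdeal R) : Ideal.span {x} ≠ ⊤ := by
  intro ht
  have h1 : Ideal.span {x} ≤ maximalIdeal R := span_le.mpr (Set.singleton_subset_iff.mpr h)
  rw [ht] at h1
  exact (maximalIdeal.isMaximal R).ne_top (top_le_iff.mp h1)

/-- Applying the `n`-OA condition to a product `(∏ g) * b`. -/
private lemma noa_head {n : ℕ} {J : Ideal R} (hJ : IsNOAIdeal n J) (g : Fin n → R)
    (hg : ∀ i, g i ∈ maximalIdeal R) {b : R} (hb : b ∈ maximalIdeal R)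
    (hmem : (∏ i, g i) * b ∈ J) : (∏ i, g i) ∈ J ∨ b ∈ J := by
  have hfst : (∏ i : Fin n, (Fin.snoc g b : Fin (n + 1) → R) i.castSucc) = ∏ i, g i := by
    apply Finset.prod_congr rfl
    intro i _
    simp
  have hgu : ∀ i, ¬IsUnit ((Fin.snoc g b : Fin (n + 1) → R) i) := by
    intro i
    refine Fin.lastCases ?_ ?_ i
    · rw [Fin.snoc_last]; exact not_unit_of_memM hb
    · intro j; simp only [Fin.snoc_castSucc]; exact not_unit_of_memM (hg j)
  have hprod : (∏ i, (Fin.snoc g b : Fin (n + 1) → R) i) ∈ J := by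
    rw [Fin.prod_univ_castSucc, hfst, Fin.snoc_last]
    exact hmem
  rcases hJ.2 (Fin.snoc g b) hgu hprod with hk | hk
  · left; rwa [hfst] at hk
  · right; rwa [Fin.snoc_last] at hk

/-- Products of elements of the maximal ideal lie in the corresponding power. -/
private lemma prod_mem_powM {ι : Type*} [DecidableEq ι] (s : Finset ι) (f : ι → R)
    (hf : ∀ i ∈ s, f i ∈ maximalIdeal R) :
    (∏ i ∈ s, f i) ∈ (maximalIdeal R) ^ s.card := by
  induction s using Finset.induction with
  | empty => simp
  | @insert a s' hx ih =>
    rw [Finset.prod_insert hx, Finset.card_insert_of_notMem hx, pow_succ']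
    exact Ideal.mul_mem_mul (hf a (Finset.mem_insert_self a s'))
      (ih fun i hi => hf i (Finset.mem_insert_of_mem hi))

/-- If all products of `k+1` elements of the maximal ideal lie in `J`, then `M^(k+1) ≤ J`. -/
private lemma pow_le_of_forall_prod : ∀ (k : ℕ) (J : Ideal R),
    (∀ g : Fin (k + 1) → R, (∀ i, g i ∈ maximalIdeal R) → (∏ i, g i) ∈ J) →
    (maximalIdeal R) ^ (k + 1) ≤ J := by
  intro k
  induction k with
  | zero =>
    intro J hJ x hx
    have := hJ (fun _ => x) (fun _ => by simpa using hx)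
    simpa using this
  | succ k ih =>
    intro J hJ
    rw [pow_succ]
    refine Ideal.mul_le.mpr ?_
    intro y hy z hz
    have hy' := ih (J.colon (Ideal.span {z})) ?_ hy
    · rwa [Ideal.mem_colon_span_singleton] at hy'
    · intro g hg
      rw [Ideal.mem_colon_span_singleton]
      have hp : (∏ i, (Fin.snoc g z : Fin (k + 2) → R) i) ∈ J :=
        hJ (Fin.snoc g z)
          (fun i => Fin.lastCases (by rwa [Fin.snoc_last])
            (fun j => by simp only [Fin.snoc_castSucc]; exact hg j) i)
      rwa [Fin.prod_snoc] at hp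

/-- Key classification: an `n`-OA ideal is prime or contains `M^n`. -/
private lemma isNOA_prime_or_pow {n : ℕ} (hn : 0 < n) {J : Ideal R} (hJ : IsNOAIdeal n J) :
    J.IsPrime ∨ (maximalIdeal R) ^ n ≤ J := by
  by_cases hp : J.IsPrime
  · exact Or.inl hp
  right
  rw [Ideal.isPrime_iff] at hp
  push_neg at hp
  obtain ⟨a, b, hab, ha, hb⟩ := hp hJ.1
  have haM : a ∈ maximalIdeal R := by
    by_contra hu
    rw [notMem_maximalIdeal] at hu
    obtain ⟨u, rfl⟩ := hu
    refine hb ?_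
    have h1 := J.mul_mem_left (↑u⁻¹) hab
    rwa [← mul_assoc, show ((↑u⁻¹ : R) * ↑u) = 1 by simp, one_mul] at h1
  have hbM : b ∈ maximalIdeal R := by
    by_contra hu
    rw [notMem_maximalIdeal] at hu
    obtain ⟨u, rfl⟩ := hu
    refine ha ?_
    have h1 := J.mul_mem_left (↑u⁻¹) hab
    rwa [show (↑u⁻¹ : R) * (a * ↑u) = a by
      rw [mul_comm a (↑u : R), ← mul_assoc]; simp] at h1
  obtain _ | _ | k := n
  · exact absurd hn (by omega)
  · -- n = 1 : impossible since J would be prime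
    have hpa : (∏ _i : Fin (0 + 1), a) = a := by simp
    have hh := noa_head hJ (fun _ => a) (fun _ => haM) hbM (by rw [hpa]; exact hab)
    rw [hpa] at hh
    rcases hh with h' | h'
    · exact absurd h' ha
    · exact absurd h' hb
  · -- n = k + 2
    have step1 : ∀ u v : R, u ∈ maximalIdeal R → v ∈ maximalIdeal R → u * v ∈ J → v ∉ J →
        ∀ c ∈ (maximalIdeal R) ^ (k + 1), c * u ∈ J := by
      intro u v huM hvM huv hv c hc
      have hcolon := pow_le_of_forall_prod k (J.colon (Ideal.span {u})) ?_ hc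
      · rwa [Ideal.mem_colon_span_singleton] at hcolon
      · intro g hg
        rw [Ideal.mem_colon_span_singleton]
        have hres := noa_head hJ (Fin.snoc g u)
          (fun i => Fin.lastCases (by rwa [Fin.snoc_last])
            (fun j => by simp only [Fin.snoc_castSucc]; exact hg j) i) hvM
          (by rw [Fin.prod_snoc, mul_assoc]; exact J.mul_mem_left _ huv)
        rcases hres with hk' | hk'
        · rwa [Fin.prod_snoc] at hk'
        · exact absurd hk' hv
    have step1a : ∀ c ∈ (maximalIdeal R) ^ (k + 1), c * a ∈ J := step1 a b haM hbM hab hb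
    have step1b : ∀ c ∈ (maximalIdeal R) ^ (k + 1), c * b ∈ J :=
      step1 b a hbM haM (by rwa [mul_comm]) ha
    refine pow_le_of_forall_prod (k + 1) J ?_
    intro x hx
    classical
    have h1ne0 : (1 : Fin (k + 2)) ≠ 0 := by
      intro hcon
      have := congrArg Fin.val hcon
      simp at this
    have h1mem : (1 : Fin (k + 2)) ∈ Finset.univ.erase (0 : Fin (k + 2)) :=
      Finset.mem_erase.mpr ⟨h1ne0, Finset.mem_univ _⟩
    set E : Finset (Fin (k + 2)) := (Finset.univ.erase 0).erase 1 with hE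
    have hsplit : ∀ f : Fin (k + 2) → R, (∏ i, f i) = f 0 * (f 1 * ∏ i ∈ E, f i) := by
      intro f
      rw [← Finset.mul_prod_erase Finset.univ f (Finset.mem_univ 0),
        ← Finset.mul_prod_erase (Finset.univ.erase 0) f h1mem]
    set P : R := ∏ i ∈ E, x i with hPdef
    have hcardE : E.card = k := by
      rw [hE, Finset.card_erase_of_mem h1mem, Finset.card_erase_of_mem (Finset.mem_univ _)]
      simp
    have hPmem : P ∈ (maximalIdeal R) ^ k := by
      have hp0 := prod_mem_powM E x (fun i _ => hx i)
      rw [hcardE] at hp0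
      exact hp0
    have hmulM : ∀ c d : R, c ∈ maximalIdeal R → d ∈ (maximalIdeal R) ^ k →
        c * d ∈ (maximalIdeal R) ^ (k + 1) := by
      intro c d hc hd
      rw [pow_succ']
      exact Ideal.mul_mem_mul hc hd
    have hm1 : x 0 * x 1 * P ∈ (maximalIdeal R) ^ (k + 1) :=
      hmulM _ _ ((maximalIdeal R).mul_mem_right _ (hx 0)) hPmem
    have hm2 : x 0 * P ∈ (maximalIdeal R) ^ (k + 1) := hmulM _ _ (hx 0) hPmem
    have hm3 : x 1 * P ∈ (maximalIdeal R) ^ (k + 1) := hmulM _ _ (hx 1) hPmem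
    have hm4 : a * x 1 * P ∈ (maximalIdeal R) ^ (k + 1) :=
      hmulM _ _ ((maximalIdeal R).mul_mem_right _ haM) hPmem
    have hA : (x 0 + a) * ((x 1 + b) * P) * a ∈ J := by
      have hid : (x 0 + a) * ((x 1 + b) * P) * a =
          ((x 0 * x 1 * P) * a + (a * b) * (x 0 * P)) +
            ((a * x 1 * P) * a + (a * b) * (P * a)) := by ring
      rw [hid]
      exact add_mem (add_mem (step1a _ hm1) (J.mul_mem_right _ hab))
        (add_mem (step1a _ hm4) (J.mul_mem_right _ hab))
    set g : Fin (k + 2) → R :=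
      Function.update (Function.update x 0 (x 0 + a)) 1 (x 1 + b) with hgdef
    have hg0 : g 0 = x 0 + a := by
      rw [hgdef, Function.update_of_ne h1ne0.symm, Function.update_self]
    have hg1 : g 1 = x 1 + b := by rw [hgdef, Function.update_self]
    have hgE : ∀ i ∈ E, g i = x i := by
      intro i hi
      rw [hE] at hi
      obtain ⟨hi1, hi0'⟩ := Finset.mem_erase.mp hi
      obtain ⟨hi0, -⟩ := Finset.mem_erase.mp hi0'
      rw [hgdef, Function.update_of_ne hi1, Function.update_of_ne hi0]
    have hgM : ∀ i, g i ∈ maximalIdeal R := by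
      intro i
      by_cases hi0 : i = 0
      · subst hi0; rw [hg0]; exact add_mem (hx 0) haM
      by_cases hi1 : i = 1
      · subst hi1; rw [hg1]; exact add_mem (hx 1) hbM
      · rw [hgdef, Function.update_of_ne hi1, Function.update_of_ne hi0]
        exact hx i
    have hgprod : (∏ i, g i) = (x 0 + a) * ((x 1 + b) * P) := by
      rw [hsplit g, hg0, hg1, hPdef]
      congr 2
      exact Finset.prod_congr rfl hgE
    rcases noa_head hJ g hgM haM (by rw [hgprod]; exact hA) with hgood | hbad
    · rw [hgprod] at hgood
      have hid2 : x 0 * (x 1 * P) =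
          (x 0 + a) * ((x 1 + b) * P) -
            ((x 0 * P) * b + ((x 1 * P) * a + (a * b) * P)) := by ring
      rw [hsplit x, ← hPdef, hid2]
      exact sub_mem hgood
        (add_mem (step1b _ hm2) (add_mem (step1a _ hm3) (J.mul_mem_right _ hab)))
    · exact absurd hbad ha

private lemma prod_le_powM : ∀ (m : ℕ) (K : Fin m → Ideal R), (∀ i, K i ≠ ⊤) →
    (∏ i, K i) ≤ (maximalIdeal R) ^ m := by
  intro m
  induction m with
  | zero => intro K hK; simp
  | succ m ih =>
    intro K hK
    rw [Fin.prod_univ_succ, pow_succ']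
    exact Ideal.mul_mono (le_maximalIdeal (hK 0)) (ih (fun i => K i.succ) (fun i => hK i.succ))

private lemma powM_le_prod : ∀ (m : ℕ) (K : Fin m → Ideal R) (n : ℕ),
    (∀ i, (maximalIdeal R) ^ n ≤ K i) → (maximalIdeal R) ^ (n * m) ≤ ∏ i, K i := by
  intro m
  induction m with
  | zero => intro K n h; simp
  | succ m ih =>
    intro K n h
    rw [Fin.prod_univ_succ, show n * (m + 1) = n + n * m by ring, pow_add]
    exact Ideal.mul_mono (h 0) (ih (fun i => K i.succ) n (fun i => h i.succ))

private lemma prod_le_factor {m : ℕ} (K : Fin m → Ideal R) (i : Fin m) :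
    (∏ j, K j) ≤ K i := by
  classical
  rw [← Finset.mul_prod_erase Finset.univ K (Finset.mem_univ i)]
  exact Ideal.mul_le_left

end Aux

theorem stmt6 {R : Type*} [CommRing R] [IsLocalRing R] (n : ℕ) (hn : 0 < n)
    (h : ∀ x : R, Ideal.span {x} ≠ ⊤ → HasNOAFactorization n (Ideal.span {x}))
    (hdim : ringKrullDim R = 1) : IsDomain R := by
  classical
  -- a chain of two primes
  have hchain : ∃ A B : PrimeSpectrum R, A < B := by
    by_contra hcon
    push_neg at hcon
    have hle : ringKrullDim R ≤ 0 := by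
      show (⨆ (q : LTSeries (PrimeSpectrum R)), (q.length : WithBot ℕ∞)) ≤ 0
      refine iSup_le fun q => ?_
      have hlen : q.length = 0 := by
        by_contra hL
        exact hcon _ _ (q.step ⟨0, Nat.pos_of_ne_zero hL⟩)
      simp [hlen]
    rw [hdim] at hle
    norm_num at hle
  obtain ⟨A, B, hAB⟩ := hchain
  have hqBM : B.asIdeal ≤ maximalIdeal R := le_maximalIdeal B.2.ne_top
  have hABlt : A.asIdeal < B.asIdeal := (PrimeSpectrum.asIdeal_lt_asIdeal _ _).mpr hAB
  have hAltM : A.asIdeal < maximalIdeal R := lt_of_lt_of_le hABlt hqBM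
  haveI := A.2
  obtain ⟨p, hpmin, hple⟩ := Ideal.exists_minimalPrimes_le (I := ⊥) (J := A.asIdeal) bot_le
  have hpmin' : p ∈ minimalPrimes R := hpmin
  have hpprime : p.IsPrime := hpmin.1.1
  have hpltM : p < maximalIdeal R := lt_of_le_of_lt hple hAltM
  -- classification of primes
  have classify : ∀ q : Ideal R, q.IsPrime → q = maximalIdeal R ∨ q ∈ minimalPrimes R := by
    intro q hq
    by_cases hqM : q = maximalIdeal R
    · exact Or.inl hqM
    right
    haveI := hq
    obtain ⟨p', hp'min, hp'le⟩ := Ideal.exists_minimalPrimes_le (I := ⊥) (J := q) bot_le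
    by_cases hpq : p' = q
    · rw [← hpq]; exact hp'min
    exfalso
    have h1 : p' < q := lt_of_le_of_ne hp'le hpq
    have h2 : q < maximalIdeal R := lt_of_le_of_ne (le_maximalIdeal hq.ne_top) hqM
    let PA : PrimeSpectrum R := ⟨p', hp'min.1.1⟩
    let PB : PrimeSpectrum R := ⟨q, hq⟩
    let PC : PrimeSpectrum R := ⟨maximalIdeal R, (maximalIdeal.isMaximal R).isPrime⟩
    have hab' : PA < PB := (PrimeSpectrum.asIdeal_lt_asIdeal _ _).mp h1
    have hbc' : PB < PC := (PrimeSpectrum.asIdeal_lt_asIdeal _ _).mp h2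
    let s0 : LTSeries (PrimeSpectrum R) := RelSeries.singleton _ PA
    have hs0 : s0.last = PA := rfl
    let s1 : LTSeries (PrimeSpectrum R) := s0.snoc PB (by rw [hs0]; exact hab')
    have hs1 : s1.last = PB := RelSeries.last_snoc _ _ _
    let s2 : LTSeries (PrimeSpectrum R) := s1.snoc PC (by rw [hs1]; exact hbc')
    have hlen2 : s2.length = 2 := rfl
    have hK := Order.LTSeries.length_le_krullDim s2
    rw [hlen2] at hK
    have hK' : ((2 : ℕ) : WithBot ℕ∞) ≤ ringKrullDim R := hK
    rw [hdim] at hK'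
    norm_num at hK'
  -- factor the zero ideal; minimal primes are among its prime factors
  obtain ⟨m₀, Jb, hm₀pos, hJb, hJbeq⟩ := h 0 (by
    rw [show Ideal.span ({(0 : R)} : Set R) = ⊥ by simp]
    exact bot_ne_top)
  have hbot : (⊥ : Ideal R) = ∏ i, Jb i := by
    rw [← hJbeq]
    exact ((Ideal.span_singleton_eq_bot.mpr rfl).symm : (⊥ : Ideal R) = Ideal.span {0})
  have hminfin : ∀ q ∈ minimalPrimes R, ∃ i, Jb i = q := by
    intro q hq
    have hq' : q.IsPrime := hq.1.1
    have hle : (∏ i, Jb i) ≤ q := by rw [← hbot]; exact bot_le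
    obtain ⟨i, -, hi⟩ := (hq'.prod_le).mp hle
    rcases isNOA_prime_or_pow hn (hJb i) with hpr | hpow
    · exact ⟨i, le_antisymm hi (hq.2 ⟨hpr, bot_le⟩ hi)⟩
    · exfalso
      have hMq : maximalIdeal R ≤ q := by
        intro y hy
        exact hq'.mem_of_pow_mem n (hi (hpow (Ideal.pow_mem_pow hy n)))
      have hqM : q = maximalIdeal R := le_antisymm (le_maximalIdeal hq'.ne_top) hMq
      have hqp : q ≤ p := hq.2 ⟨hpprime, bot_le⟩ (by rw [hqM]; exact hpltM.le)
      rw [hqM] at hqp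
      exact lt_irrefl _ (lt_of_lt_of_le hpltM hqp)
  -- choose s in M avoiding all minimal primes
  obtain ⟨s, hsM, hs⟩ : ∃ s ∈ maximalIdeal R, ∀ q ∈ minimalPrimes R, s ∉ q := by
    by_contra hcon
    push_neg at hcon
    have hsub : (maximalIdeal R : Set R) ⊆
        ⋃ i ∈ Finset.univ.filter (fun i => Jb i ∈ minimalPrimes R), ↑(Jb i) := by
      intro y hy
      obtain ⟨q, hq, hyq⟩ := hcon y hy
      obtain ⟨i, rfl⟩ := hminfin q hq
      exact Set.mem_biUnion (Finset.mem_filter.mpr ⟨Finset.mem_univ _, hq⟩) hyq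
    obtain ⟨ip, -⟩ := hminfin p hpmin'
    have hres := (Ideal.subset_union_prime ip ip
      (fun i hi _ _ => (Finset.mem_filter.mp hi).2.1.1)).mp hsub
    obtain ⟨i, hi, hMle⟩ := hres
    have hiq : Jb i ∈ minimalPrimes R := (Finset.mem_filter.mp hi).2
    have hqM : Jb i = maximalIdeal R := le_antisymm (le_maximalIdeal hiq.1.1.ne_top) hMle
    have hqp : Jb i ≤ p := hiq.2 ⟨hpprime, bot_le⟩ (by rw [hqM]; exact hpltM.le)
    rw [hqM] at hqp
    exact lt_irrefl _ (lt_of_lt_of_le hpltM hqp)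
  -- M^(n*ms) ≤ span {s}
  obtain ⟨ms, Js, hmspos, hJs, hJseq⟩ := h s (span_ne_top' hsM)
  have hfacs : ∀ i, (maximalIdeal R) ^ n ≤ Js i := by
    intro i
    rcases isNOA_prime_or_pow hn (hJs i) with hpr | hpow
    · have hsJ : s ∈ Js i := by
        have hh : Ideal.span {s} ≤ Js i := by rw [hJseq]; exact prod_le_factor Js i
        exact hh (Ideal.mem_span_singleton_self s)
      rcases classify (Js i) hpr with hM | hmin
      · rw [hM]; exact Ideal.pow_le_self hn.ne'
      · exact absurd hsJ (hs _ hmin)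
    · exact hpow
  have hKs : (maximalIdeal R) ^ (n * ms) ≤ Ideal.span {s} := by
    rw [hJseq]
    exact powM_le_prod ms Js n hfacs
  -- main step : every element of p lies in span {s}
  have main : ∀ w ∈ p, w ∈ Ideal.span {s} := by
    intro w hw
    have hwM : w ∈ maximalIdeal R := hpltM.le hw
    obtain ⟨t, htlb, hgood⟩ :
        ∃ t, n * (n * ms) + 1 ≤ t ∧ ∀ q ∈ minimalPrimes R, w + s ^ t ∉ q := by
      by_contra hcon
      push_neg at hcon
      set T₀ := n * (n * ms) + 1 with hT₀
      have hex : ∀ t : ℕ, ∃ i : Fin m₀,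
          t ∈ Finset.Icc T₀ (T₀ + m₀) → (Jb i ∈ minimalPrimes R ∧ w + s ^ t ∈ Jb i) := by
        intro t
        by_cases ht : t ∈ Finset.Icc T₀ (T₀ + m₀)
        · obtain ⟨q, hq, hmem⟩ := hcon t (Finset.mem_Icc.mp ht).1
          obtain ⟨i, rfl⟩ := hminfin q hq
          exact ⟨i, fun _ => ⟨hq, hmem⟩⟩
        · exact ⟨⟨0, hm₀pos⟩, fun hcon' => absurd hcon' ht⟩
      choose F hF using hex
      have hcard : (Finset.univ : Finset (Fin m₀)).card < (Finset.Icc T₀ (T₀ + m₀)).card := by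
        rw [Nat.card_Icc, Finset.card_univ, Fintype.card_fin]
        omega
      obtain ⟨t1, ht1, t2, ht2, hne, heq⟩ :=
        Finset.exists_ne_map_eq_of_card_lt_of_maps_to hcard (fun t _ => Finset.mem_univ (F t))
      obtain ⟨hq1, hm1'⟩ := hF t1 ht1
      obtain ⟨hq2, hm2'⟩ := hF t2 ht2
      rw [heq] at hm1'
      set q := Jb (F t2) with hqdef
      have hqpr : q.IsPrime := hq2.1.1
      have key : ∀ u1 u2 : ℕ, u1 < u2 → w + s ^ u1 ∈ q → w + s ^ u2 ∈ q → False := by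
        intro u1 u2 hlt k1 k2
        have hpow2 : s ^ u1 * s ^ (u2 - u1) = s ^ u2 := by
          rw [← pow_add]; congr 1; omega
        have hdiff : s ^ u1 * (s ^ (u2 - u1) - 1) ∈ q := by
          have hsub2 : (w + s ^ u2) - (w + s ^ u1) ∈ q := Ideal.sub_mem _ k2 k1
          have hrw : (w + s ^ u2) - (w + s ^ u1) = s ^ u1 * (s ^ (u2 - u1) - 1) := by
            rw [mul_sub, mul_one, hpow2]; ring
          rwa [hrw] at hsub2
        rcases hqpr.mem_or_mem hdiff with hin | hin
        · exact hs q hq2 (hqpr.mem_of_pow_mem _ hin)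
        · have hneg : (1 : R) - s ^ (u2 - u1) ∈ q := by
            have := q.neg_mem hin; simpa using this
          have hmem' : s ^ (u2 - u1) ∈ maximalIdeal R :=
            (Ideal.pow_le_self (by omega)) (Ideal.pow_mem_pow hsM _)
          exact hqpr.ne_top (q.eq_top_of_isUnit_mem hneg (unit_one_sub hmem'))
      rcases hne.lt_or_gt with hlt | hlt
      · exact key t1 t2 hlt hm1' hm2'
      · exact key t2 t1 hlt hm2' hm1'
    have hstM : s ^ t ∈ maximalIdeal R :=
      (Ideal.pow_le_self (by omega)) (Ideal.pow_mem_pow hsM t)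
    have hxM : w + s ^ t ∈ maximalIdeal R := add_mem hwM hstM
    obtain ⟨m', K, hm'pos, hKnoa, hKeq⟩ := h (w + s ^ t) (span_ne_top' hxM)
    have hfacx : ∀ i, (maximalIdeal R) ^ n ≤ K i := by
      intro i
      rcases isNOA_prime_or_pow hn (hKnoa i) with hpr | hpow
      · have hxK : w + s ^ t ∈ K i := by
          have hh : Ideal.span {w + s ^ t} ≤ K i := by rw [hKeq]; exact prod_le_factor K i
          exact hh (Ideal.mem_span_singleton_self _)
        rcases classify (K i) hpr with hM | hmin
        · rw [hM]; exact Ideal.pow_le_self hn.ne'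
        · exact absurd hxK (hgood _ hmin)
      · exact hpow
    have hup : Ideal.span {w + s ^ t} ≤ (maximalIdeal R) ^ m' := by
      rw [hKeq]
      exact prod_le_powM m' K (fun i => (hKnoa i).1)
    have hlow : (maximalIdeal R) ^ (n * m') ≤ Ideal.span {w + s ^ t} := by
      rw [hKeq]
      exact powM_le_prod m' K n hfacx
    have hnm : t ≤ n * m' := by
      by_contra hlt
      push_neg at hlt
      have hsmem : s ^ (n * m') ∈ Ideal.span {w + s ^ t} := hlow (Ideal.pow_mem_pow hsM _)
      obtain ⟨ρ, hρ⟩ := Ideal.mem_span_singleton'.mp hsmem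
      have hpow2 : s ^ (n * m') * s ^ (t - n * m') = s ^ t := by
        rw [← pow_add]; congr 1; omega
      have hid : s ^ (n * m') * (1 - ρ * s ^ (t - n * m')) = ρ * w := by
        calc s ^ (n * m') * (1 - ρ * s ^ (t - n * m'))
            = s ^ (n * m') - ρ * (s ^ (n * m') * s ^ (t - n * m')) := by ring
          _ = s ^ (n * m') - ρ * s ^ t := by rw [hpow2]
          _ = ρ * w := by linear_combination - hρ
      have huu : IsUnit (1 - ρ * s ^ (t - n * m')) := by
        apply unit_one_sub
        exact (maximalIdeal R).mul_mem_left ρ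
          ((Ideal.pow_le_self (by omega)) (Ideal.pow_mem_pow hsM _))
      obtain ⟨u, hu⟩ := huu
      rw [← hu] at hid
      have heq2 : s ^ (n * m') = ρ * w * ↑u⁻¹ := by
        have h3 : s ^ (n * m') * ↑u * ↑u⁻¹ = ρ * w * ↑u⁻¹ := by rw [hid]
        rwa [mul_assoc, Units.mul_inv, mul_one] at h3
      have hsp : s ^ (n * m') ∈ p := by
        rw [heq2]
        exact p.mul_mem_right _ (p.mul_mem_left _ hw)
      exact hs p hpmin' (hpprime.mem_of_pow_mem _ hsp)
    have hmge : n * ms ≤ m' :=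
      le_of_lt (Nat.lt_of_mul_lt_mul_left (a := n) (by omega))
    have hxmem : w + s ^ t ∈ Ideal.span {s} :=
      hKs (Ideal.pow_le_pow_right hmge (hup (Ideal.mem_span_singleton_self _)))
    have hstmem : s ^ t ∈ Ideal.span {s} :=
      Ideal.mem_span_singleton.mpr (dvd_pow_self s (by omega))
    have hweq : w = (w + s ^ t) - s ^ t := by ring
    rw [hweq]
    exact Ideal.sub_mem _ hxmem hstmem
  -- p = span{s} * p
  have hps : p = Ideal.span {s} * p := by
    apply le_antisymm
    · intro v hv
      obtain ⟨c, hc⟩ := Ideal.mem_span_singleton'.mp (main v hv)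
      have hcp : c ∈ p := by
        have hcs : c * s ∈ p := by rw [hc]; exact hv
        rcases hpprime.mem_or_mem hcs with h' | h'
        · exact h'
        · exact absurd h' (hs p hpmin')
      rw [← hc, mul_comm c s]
      exact Ideal.mul_mem_mul (Ideal.mem_span_singleton_self s) hcp
    · exact Ideal.mul_le_right
  -- every element of p is zero
  have hzero : ∀ v ∈ p, v = (0 : R) := by
    intro v hv
    by_contra hv0
    have hvM : v ∈ maximalIdeal R := hpltM.le hv
    obtain ⟨mv, Jv, hmvpos, hJv, hJveq⟩ := h v (span_ne_top' hvM)
    have hlep : (∏ i, Jv i) ≤ p := by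
      rw [← hJveq]
      exact span_le.mpr (Set.singleton_subset_iff.mpr hv)
    obtain ⟨i₀, -, hi₀⟩ := (hpprime.prod_le).mp hlep
    have hJvp : Jv i₀ = p := by
      rcases isNOA_prime_or_pow hn (hJv i₀) with hpr | hpow
      · exact le_antisymm hi₀ (hpmin.2 ⟨hpr, bot_le⟩ hi₀)
      · exfalso
        have hMp : maximalIdeal R ≤ p := by
          intro y hy
          exact hpprime.mem_of_pow_mem n (hi₀ (hpow (Ideal.pow_mem_pow hy n)))
        exact lt_irrefl _ (lt_of_lt_of_le hpltM hMp)
    have hveq : Ideal.span {v} = Ideal.span {s} * Ideal.span {v} := by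
      conv_lhs => rw [hJveq]
      rw [← Finset.mul_prod_erase Finset.univ Jv (Finset.mem_univ i₀), hJvp]
      conv_lhs => rw [hps]
      rw [mul_assoc, ← hJvp,
        Finset.mul_prod_erase Finset.univ Jv (Finset.mem_univ i₀), ← hJveq]
    have hvmem : v ∈ Ideal.span {s * v} := by
      rw [← Ideal.span_singleton_mul_span_singleton, ← hveq]
      exact Ideal.mem_span_singleton_self v
    obtain ⟨r, hr⟩ := Ideal.mem_span_singleton'.mp hvmem
    have hzero' : (1 - r * s) * v = 0 := by linear_combination - hr
    have hu : IsUnit (1 - r * s) := unit_one_sub ((maximalIdeal R).mul_mem_left r hsM)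
    exact hv0 ((hu.mul_right_eq_zero).mp hzero')
  have hpbot : p = ⊥ := by
    rw [eq_bot_iff]
    intro v hv
    rw [Ideal.mem_bot]
    exact hzero v hv
  have hbotprime : (⊥ : Ideal R).IsPrime := hpbot ▸ hpprime
  haveI : NoZeroDivisors R := by
    constructor
    intro a b hab
    have hmem : a * b ∈ (⊥ : Ideal R) := by rw [Ideal.mem_bot]; exact hab
    rcases hbotprime.mem_or_mem hmem with h' | h'
    · rw [Ideal.mem_bot] at h'; exact Or.inl h'
    · rw [Ideal.mem_bot] at h'; exact Or.inr h'
  exact NoZeroDivisors.to_isDomain R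
end

section
/- Let R be a reduced local commutative ring with Krull dimension at least 2 such that every proper principal ideal of R has an n-OA-factorization. Then R is a unique factorization domain. -/
section Auxiliary

variable {R : Type*} [CommRing R]

/-- Applying the `n`-OA property to the sequence `(z, ..., z, y₁, y₂)`. -/
lemma noa_step [IsLocalRing R] {n k : ℕ} {I : Ideal R}
    (hI : IsNOAIdeal n I) (hnk : n = k + 1) (z y₁ y₂ : R)
    (hz : ¬IsUnit z) (hy₁ : ¬IsUnit y₁) (hy₂ : ¬IsUnit y₂)
    (hprod : z ^ k * y₁ * y₂ ∈ I) : z ^ k * y₁ ∈ I ∨ y₂ ∈ I := by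
  subst hnk
  set a : Fin (k + 1 + 1) → R := Fin.snoc (Fin.snoc (fun _ : Fin k => z) y₁) y₂ with ha
  have h1 : ∀ i, ¬IsUnit (a i) := by
    intro i
    refine Fin.lastCases ?_ (fun j => ?_) i
    · simpa [ha] using hy₂
    · rw [ha, Fin.snoc_castSucc]
      refine Fin.lastCases ?_ (fun j' => ?_) j
      · simpa using hy₁
      · rw [Fin.snoc_castSucc]; exact hz
  have hcast : (fun i : Fin (k + 1) => a i.castSucc) = Fin.snoc (fun _ : Fin k => z) y₁ := by
    funext j; rw [ha, Fin.snoc_castSucc]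
  have hinit : (∏ i : Fin (k + 1), a i.castSucc) = z ^ k * y₁ := by
    rw [show (∏ i : Fin (k + 1), a i.castSucc) = ∏ i : Fin (k + 1),
        (Fin.snoc (fun _ : Fin k => z) y₁ : Fin (k+1) → R) i from by rw [← hcast],
      Fin.prod_univ_castSucc]
    simp
  have hfull : (∏ i, a i) = z ^ k * y₁ * y₂ := by
    rw [Fin.prod_univ_castSucc, hinit]
    simp [ha]
  have := hI.2 a h1 (by rw [hfull]; exact hprod)
  rw [hinit] at this
  simpa [ha] using this

/-- A non-prime `n`-OA ideal of a local ring contains the `n`-th power of every nonunit. -/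
lemma IsNOAIdeal.pow_mem_of_not_isPrime [IsLocalRing R] {n : ℕ}
    (hn : 0 < n) {I : Ideal R} (hI : IsNOAIdeal n I) (hp : ¬ I.IsPrime)
    {z : R} (hz : ¬IsUnit z) : z ^ n ∈ I := by
  obtain ⟨k, rfl⟩ : ∃ k, n = k + 1 := ⟨n - 1, by omega⟩
  rw [Ideal.isPrime_iff] at hp
  push_neg at hp
  obtain ⟨b, c, hbc, hb, hc⟩ := hp hI.1
  have hbu : ¬IsUnit b := by
    intro hu
    obtain ⟨u, rfl⟩ := hu
    exact hc (by simpa using I.mul_mem_left (↑u⁻¹) hbc)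
  have hcu : ¬IsUnit c := by
    intro hu
    obtain ⟨u, rfl⟩ := hu
    exact hb (by simpa [mul_comm] using I.mul_mem_left (↑u⁻¹) hbc)
  have O1 : z ^ k * b ∈ I := by
    refine (noa_step hI rfl z b c hz hbu hcu ?_).resolve_right hc
    rw [mul_assoc]; exact I.mul_mem_left _ hbc
  have O2 : z ^ k * c ∈ I := by
    refine (noa_step hI rfl z c b hz hcu hbu ?_).resolve_right hb
    have : z ^ k * c * b = z ^ k * (b * c) := by ring
    rw [this]; exact I.mul_mem_left _ hbc
  have hzb : ¬IsUnit (z + b) := by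
    have h1 : z ∈ nonunits R := hz
    have h2 : b ∈ nonunits R := hbu
    exact IsLocalRing.nonunits_add h1 h2
  have O3 : z ^ k * (z + b) ∈ I := by
    refine (noa_step hI rfl z (z + b) c hz hzb hcu ?_).resolve_right hc
    have : z ^ k * (z + b) * c = z * (z ^ k * c) + z ^ k * (b * c) := by ring
    rw [this]
    exact I.add_mem (I.mul_mem_left _ O2) (I.mul_mem_left _ hbc)
  have : z ^ (k + 1) = z ^ k * (z + b) - z ^ k * b := by ring
  rw [this]
  exact I.sub_mem O3 O1

/-- If a product of two ideals is a principal ideal generated by a regular element in a local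
ring, both factors are principal. -/
lemma principal_of_mul_eq [IsLocalRing R] {x : R}
    (hx : x ∈ nonZeroDivisors R) {I K : Ideal R} (hIK : Ideal.span {x} = I * K) :
    ∃ a b : R, I = Ideal.span {a} ∧ K = Ideal.span {b} ∧
      Ideal.span ({x} : Set R) = Ideal.span {a * b} := by
  have hxreg : ∀ z : R, z * x = 0 → z = 0 := fun z hz =>
    (mem_nonZeroDivisors_iff_right.mp hx) z hz
  have hxmem : x ∉ IsLocalRing.maximalIdeal R * Ideal.span {x} := by
    intro hmem
    obtain ⟨e, he, hex⟩ := Ideal.mem_mul_span_singleton.mp hmem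
    have : (e - 1) * x = 0 := by rw [sub_mul, hex, one_mul, sub_self]
    have he1 : e = 1 := by have := hxreg _ this; linear_combination this
    rw [he1] at he
    exact (IsLocalRing.maximalIdeal.isMaximal R).ne_top (Ideal.eq_top_of_isUnit_mem _ he isUnit_one)
  have hnle : ¬ (I * K ≤ IsLocalRing.maximalIdeal R * Ideal.span {x}) := by
    intro hle
    exact hxmem (hle (hIK ▸ Ideal.mem_span_singleton_self x))
  rw [Ideal.mul_le] at hnle
  push_neg at hnle
  obtain ⟨a, haI, b, hbK, hab⟩ := hnle
  have habx : a * b ∈ Ideal.span {x} := hIK ▸ Ideal.mul_mem_mul haI hbK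
  obtain ⟨t, ht⟩ := Ideal.mem_span_singleton'.mp habx
  have htu : IsUnit t := by
    by_contra htu
    apply hab
    rw [← ht]
    exact Ideal.mul_mem_mul ((IsLocalRing.mem_maximalIdeal t).mpr htu)
      (Ideal.mem_span_singleton_self x)
  obtain ⟨u, rfl⟩ := htu
  have hxab : x = (↑u⁻¹ : R) * (a * b) := by
    rw [← ht, ← mul_assoc, Units.inv_mul, one_mul]
  have hareg : ∀ z : R, z * a = 0 → z = 0 := by
    intro z hz
    apply hxreg
    rw [hxab]
    calc z * ((↑u⁻¹ : R) * (a * b)) = (↑u⁻¹ : R) * b * (z * a) := by ring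
    _ = 0 := by rw [hz, mul_zero]
  have hbreg : ∀ z : R, z * b = 0 → z = 0 := by
    intro z hz
    apply hxreg
    rw [hxab]
    calc z * ((↑u⁻¹ : R) * (a * b)) = (↑u⁻¹ : R) * a * (z * b) := by ring
    _ = 0 := by rw [hz, mul_zero]
  have hIa : I = Ideal.span {a} := by
    apply le_antisymm
    · intro j hjI
      have hmem : j * b ∈ Ideal.span {x} := hIK ▸ Ideal.mul_mem_mul hjI hbK
      obtain ⟨s, hs⟩ := Ideal.mem_span_singleton'.mp hmem
      rw [Ideal.mem_span_singleton']
      refine ⟨s * ↑u⁻¹, ?_⟩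
      have h0 : (s * ↑u⁻¹ * a - j) * b = 0 := by
        have hsx : s * x = j * b := hs
        rw [hxab] at hsx
        linear_combination hsx
      have := hbreg _ h0
      linear_combination this
    · rw [Ideal.span_singleton_le_iff_mem]; exact haI
  have hKb : K = Ideal.span {b} := by
    apply le_antisymm
    · intro j hjK
      have hmem : a * j ∈ Ideal.span {x} := hIK ▸ Ideal.mul_mem_mul haI hjK
      obtain ⟨s, hs⟩ := Ideal.mem_span_singleton'.mp hmem
      rw [Ideal.mem_span_singleton']
      refine ⟨s * ↑u⁻¹, ?_⟩
      have h0 : (s * ↑u⁻¹ * b - j) * a = 0 := by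
        have hsx : s * x = a * j := hs
        rw [hxab] at hsx
        linear_combination hsx
      have := hareg _ h0
      linear_combination this
    · rw [Ideal.span_singleton_le_iff_mem]; exact hbK
  exact ⟨a, b, hIa, hKb, by
    rw [hIK, hIa, hKb, Ideal.span_singleton_mul_span_singleton]⟩

/-- If a regular element's principal ideal is a finite product of ideals in a local ring,
all factors are principal with the product of generators generating the ideal. -/
lemma principal_factors [IsLocalRing R] :
    ∀ (m : ℕ) (x : R), x ∈ nonZeroDivisors R → ∀ (J : Fin m → Ideal R),
    Ideal.span {x} = ∏ i, J i →
    ∃ c : Fin m → R, (∀ i, J i = Ideal.span {c i}) ∧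
      Ideal.span ({x} : Set R) = Ideal.span {∏ i, c i} := by
  intro m
  induction m with
  | zero =>
    intro x hx J hJ
    refine ⟨fun i => i.elim0, fun i => i.elim0, ?_⟩
    rw [hJ]
    simp [Ideal.one_eq_top]
  | succ m ih =>
    intro x hx J hJ
    rw [Fin.prod_univ_succ] at hJ
    obtain ⟨a, b, hJ0, hrest, hxab⟩ := principal_of_mul_eq hx hJ
    have hxreg : ∀ z : R, z * x = 0 → z = 0 := fun z hz =>
      (mem_nonZeroDivisors_iff_right.mp hx) z hz
    obtain ⟨r, hr⟩ := Ideal.mem_span_singleton'.mp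
      (hxab ▸ Ideal.mem_span_singleton_self x)
    have hb : b ∈ nonZeroDivisors R := by
      rw [mem_nonZeroDivisors_iff_right]
      intro w hw
      apply hxreg
      rw [← hr]
      calc w * (r * (a * b)) = r * a * (w * b) := by ring
      _ = 0 := by rw [hw, mul_zero]
    obtain ⟨c', hc', hbc⟩ := ih b hb (fun i => J i.succ) hrest.symm
    refine ⟨Fin.cons a c', ?_, ?_⟩
    · intro i
      refine Fin.cases ?_ (fun j => ?_) i
      · simpa using hJ0
      · simpa using hc' j
    · rw [Fin.prod_univ_succ]
      simp only [Fin.cons_zero, Fin.cons_succ]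
      rw [hxab, ← Ideal.span_singleton_mul_span_singleton, ← Ideal.span_singleton_mul_span_singleton,
        ← hbc]

/-- In a reduced ring, a regular element is not in any minimal prime. -/
lemma not_mem_minimalPrime_of_regular [IsReduced R] {M : Ideal R}
    (hM : M ∈ minimalPrimes R) {x : R} (hx : x ∈ nonZeroDivisors R) : x ∉ M := by
  intro hxM
  haveI hMp : M.IsPrime := hM.1.1
  have h1 : algebraMap R (Localization M.primeCompl) x ∈
      IsLocalRing.maximalIdeal (Localization M.primeCompl) :=
    (IsLocalization.AtPrime.to_map_mem_maximal_iff _ M x).mpr hxM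
  have hnil : IsNilpotent (algebraMap R (Localization M.primeCompl) x) :=
    absurd hx (notMem_nonZeroDivisors_of_mem_mem_minimalPrimes hxM hM)
  obtain ⟨k, hk⟩ := hnil
  rw [← map_pow, IsLocalization.map_eq_zero_iff M.primeCompl] at hk
  obtain ⟨s, hs⟩ := hk
  have hsx : (s : R) = 0 := (mem_nonZeroDivisors_iff_right.mp (pow_mem hx k)) s hs
  exact s.2 (hsx ▸ M.zero_mem)

end Auxiliary

theorem stmt7 {R : Type*} [CommRing R] [IsLocalRing R] [IsReduced R] (n : ℕ) (hn : 0 < n)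
    (h : ∀ x : R, Ideal.span {x} ≠ ⊤ → HasNOAFactorization n (Ideal.span {x}))
    (hdim : 2 ≤ ringKrullDim R) :
    ∃ _ : IsDomain R, UniqueFactorizationMonoid R := by
  classical
  -- Extract a chain of primes p0 < q < p2 from the dimension hypothesis.
  obtain ⟨cs, hcs⟩ : ∃ cs : LTSeries (PrimeSpectrum R), 2 ≤ cs.length := by
    by_contra hcon
    push_neg at hcon
    have hle : ringKrullDim R ≤ (1 : ℕ) := by
      rw [ringKrullDim, Order.krullDim]
      exact iSup_le fun p => by exact_mod_cast Nat.le_of_lt_succ (hcon p)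
    have : (2 : WithBot ℕ∞) ≤ 1 := le_trans hdim hle
    norm_num at this
  set p0 : Ideal R := (cs ⟨0, by omega⟩).asIdeal with hp0_def
  set q : Ideal R := (cs ⟨1, by omega⟩).asIdeal with hq_def
  set p2 : Ideal R := (cs ⟨2, by omega⟩).asIdeal with hp2_def
  haveI hp0_prime : p0.IsPrime := (cs ⟨0, by omega⟩).2
  haveI hq_prime : q.IsPrime := (cs ⟨1, by omega⟩).2
  haveI hp2_prime : p2.IsPrime := (cs ⟨2, by omega⟩).2
  have hp0q : p0 < q := cs.strictMono (by simp [Fin.lt_def])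
  have hqp2 : q < p2 := cs.strictMono (by simp [Fin.lt_def])
  have hq_lt_m : q < IsLocalRing.maximalIdeal R :=
    lt_of_lt_of_le hqp2 (IsLocalRing.le_maximalIdeal hp2_prime.ne_top)
  -- n-OA power lemma, specialized
  have K1 : ∀ {I : Ideal R}, IsNOAIdeal n I → ¬ I.IsPrime →
      ∀ z ∈ IsLocalRing.maximalIdeal R, z ^ n ∈ I := by
    intro I hI hp z hz
    exact hI.pow_mem_of_not_isPrime hn hp ((IsLocalRing.mem_maximalIdeal z).mp hz)
  -- The minimal primes form a finite set.
  obtain ⟨k0, J0, hk0pos, hJ0oa, hJ0eq⟩ := h 0 (by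
    rw [Ideal.span_singleton_eq_bot.mpr rfl]
    exact bot_ne_top)
  rw [Ideal.span_singleton_eq_bot.mpr rfl] at hJ0eq
  have hminfin : (minimalPrimes R).Finite := by
    apply Set.Finite.subset (Set.finite_range fun i => (J0 i).radical)
    intro M hM
    haveI hMp : M.IsPrime := hM.1.1
    have hle : ∏ i, J0 i ≤ M := hJ0eq ▸ bot_le
    obtain ⟨i, -, hi⟩ := (Ideal.IsPrime.prod_le hMp).mp hle
    have hrad_le : (J0 i).radical ≤ M := by
      calc (J0 i).radical ≤ M.radical := Ideal.radical_mono hi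
      _ = M := hMp.radical
    have hrad_prime : (J0 i).radical.IsPrime := by
      by_cases hp : (J0 i).IsPrime
      · rwa [hp.radical]
      · have h1 : (J0 i).radical = IsLocalRing.maximalIdeal R := by
          apply le_antisymm
          · calc (J0 i).radical ≤ (IsLocalRing.maximalIdeal R).radical :=
                Ideal.radical_mono (IsLocalRing.le_maximalIdeal (hJ0oa i).1)
            _ = IsLocalRing.maximalIdeal R :=
                (IsLocalRing.maximalIdeal.isMaximal R).isPrime.radical
          · intro z hz
            exact Ideal.mem_radical_iff.mpr ⟨n, K1 (hJ0oa i) hp z hz⟩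
        rw [h1]
        exact (IsLocalRing.maximalIdeal.isMaximal R).isPrime
    refine ⟨i, le_antisymm hrad_le (hM.2 ⟨hrad_prime, bot_le⟩ hrad_le)⟩
  -- avoidance of minimal primes gives regular elements
  have hreg_of : ∀ {y : R}, (∀ M ∈ minimalPrimes R, y ∉ M) → y ∈ nonZeroDivisors R := by
    intro y hy
    rw [mem_nonZeroDivisors_iff_right]
    intro w hw
    by_contra hw0
    have hwrad : w ∉ (nilradical R) := by
      rw [nilradical_eq_zero]
      simpa using hw0
    rw [nilradical, Ideal.radical_eq_sInf, Ideal.mem_sInf] at hwrad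
    push_neg at hwrad
    obtain ⟨P, ⟨-, hP_prime⟩, hwP⟩ := hwrad
    haveI := hP_prime
    obtain ⟨M, hM_min, hM_le⟩ := Ideal.exists_minimalPrimes_le (bot_le (a := P))
    haveI hMp : M.IsPrime := hM_min.1.1
    have : w * y ∈ M := by rw [hw]; exact M.zero_mem
    rcases hMp.mem_or_mem this with hmem | hmem
    · exact hwP (hM_le hmem)
    · exact hy M hM_min hmem
  set T : Finset (Ideal R) := hminfin.toFinset with hT_def
  -- no minimal prime contains q
  obtain ⟨M0, hM0_min, hM0_le⟩ := Ideal.exists_minimalPrimes_le (bot_le (a := p0))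
  have hqM : ∀ M ∈ minimalPrimes R, ¬ q ≤ M := by
    intro M hMmin hqle
    have h1 : M ≤ M0 := hMmin.2 ⟨hM0_min.1.1, bot_le⟩
      (le_trans hM0_le (le_trans (le_of_lt hp0q) hqle))
    exact lt_irrefl p0 (lt_of_lt_of_le hp0q (le_trans hqle (le_trans h1 hM0_le)))
  -- a regular element in q
  obtain ⟨y, hyq, hy_min⟩ : ∃ y ∈ q, ∀ M ∈ minimalPrimes R, y ∉ M := by
    by_contra hcon
    push_neg at hcon
    have hsub : (q : Set R) ⊆ ⋃ M ∈ (↑T : Set (Ideal R)), ((M : Ideal R) : Set R) := by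
      intro y hy
      obtain ⟨M, hM, hyM⟩ := hcon y hy
      exact Set.mem_biUnion (Finset.mem_coe.mpr (hminfin.mem_toFinset.mpr hM)) hyM
    rw [Ideal.subset_union_prime ⊥ ⊥ (fun i hi _ _ => (hminfin.mem_toFinset.mp hi).1.1)] at hsub
    obtain ⟨M, hMT, hqle⟩ := hsub
    exact hqM M (hminfin.mem_toFinset.mp hMT) hqle
  have hy_reg : y ∈ nonZeroDivisors R := hreg_of hy_min
  -- a regular element in m \ q
  obtain ⟨z, hz_mem, hzq, hz_min⟩ : ∃ z, z ∈ IsLocalRing.maximalIdeal R ∧ z ∉ q ∧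
      ∀ M ∈ minimalPrimes R, z ∉ M := by
    by_contra hcon
    push_neg at hcon
    have hsub : (IsLocalRing.maximalIdeal R : Set R) ⊆
        ⋃ M ∈ (↑(insert q T) : Set (Ideal R)), ((M : Ideal R) : Set R) := by
      intro z hzm
      by_cases hzq : z ∈ q
      · exact Set.mem_biUnion (Finset.mem_coe.mpr (Finset.mem_insert_self q T)) hzq
      · obtain ⟨M, hM, hzM⟩ := hcon z hzm hzq
        exact Set.mem_biUnion
          (Finset.mem_coe.mpr (Finset.mem_insert_of_mem (hminfin.mem_toFinset.mpr hM))) hzM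
    rw [Ideal.subset_union_prime ⊥ ⊥ ?_] at hsub
    · obtain ⟨M, hMT, hmM⟩ := hsub
      rcases Finset.mem_insert.mp hMT with rfl | hMT'
      · exact absurd (lt_of_lt_of_le hq_lt_m hmM) (lt_irrefl q)
      · exact hqM M (hminfin.mem_toFinset.mp hMT')
          (le_trans (le_of_lt hq_lt_m) hmM)
    · intro i hi _ _
      rcases Finset.mem_insert.mp hi with rfl | hi'
      · exact hq_prime
      · exact (hminfin.mem_toFinset.mp hi').1.1
  have hz_reg : z ∈ nonZeroDivisors R := hreg_of hz_min
  -- produce a regular prime element p ∈ q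
  have hy_nu : ¬ IsUnit y := fun hu => hq_prime.ne_top (Ideal.eq_top_of_isUnit_mem _ hyq hu)
  obtain ⟨k1, J1, hk1pos, hJ1oa, hJ1eq⟩ := h y (by
    rw [Ne, Ideal.span_singleton_eq_top]; exact hy_nu)
  obtain ⟨c1, hc1, hyc⟩ := principal_factors k1 y hy_reg J1 hJ1eq
  obtain ⟨i, -, hi⟩ : ∃ i ∈ Finset.univ, Ideal.span {c1 i} ≤ q := by
    rw [← Ideal.IsPrime.prod_le hq_prime]
    rw [Ideal.prod_span_singleton, ← hyc]
    rw [Ideal.span_singleton_le_iff_mem]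
    exact hyq
  set p : R := c1 i with hp_def
  have hpq : p ∈ q := hi (Ideal.mem_span_singleton_self p)
  have hJ1i_prime : (J1 i).IsPrime := by
    by_contra hnp
    have hz2 : z ^ n ∈ q := hi (hc1 i ▸ K1 (hJ1oa i) hnp z hz_mem)
    exact hzq (hq_prime.mem_of_pow_mem n hz2)
  have hp_prime_ideal : (Ideal.span ({p} : Set R)).IsPrime := hc1 i ▸ hJ1i_prime
  have hp_reg : p ∈ nonZeroDivisors R := by
    rw [mem_nonZeroDivisors_iff_right]
    intro t ht
    obtain ⟨s, hs⟩ := Ideal.mem_span_singleton'.mp (hyc ▸ Ideal.mem_span_singleton_self y)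
    have hpdvd : p ∣ ∏ j, c1 j := Finset.dvd_prod_of_mem _ (Finset.mem_univ i)
    obtain ⟨w, hw⟩ := hpdvd
    apply (mem_nonZeroDivisors_iff_right.mp hy_reg) t
    rw [← hs, hw]
    calc t * (s * (p * w)) = s * w * (t * p) := by ring
    _ = 0 := by rw [ht, mul_zero]
  have hp0' : p ≠ 0 := by
    intro h0
    have := (mem_nonZeroDivisors_iff_right.mp hp_reg) 1 (by rw [h0]; ring)
    exact one_ne_zero this
  have hp_m : p ∈ IsLocalRing.maximalIdeal R :=
    IsLocalRing.le_maximalIdeal hq_prime.ne_top hpq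
  have hp_elem : Prime p := (Ideal.span_singleton_prime hp0').mp hp_prime_ideal
  -- Domain: the minimal prime below (p) is zero.
  haveI := hp_prime_ideal
  obtain ⟨M, hM_min, hM_le⟩ := Ideal.exists_minimalPrimes_le (bot_le (a := Ideal.span {p}))
  haveI hM_prime : M.IsPrime := hM_min.1.1
  have hpM : p ∉ M := not_mem_minimalPrime_of_regular hM_min hp_reg
  have hMbot : M = ⊥ := by
    rw [eq_bot_iff]
    intro a haM
    rw [Ideal.mem_bot]
    by_contra ha0
    have haspan : Ideal.span ({a} : Set R) ≠ ⊤ := by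
      rw [Ne, Ideal.span_singleton_eq_top]
      intro hu
      exact hM_prime.ne_top (Ideal.eq_top_of_isUnit_mem _ haM hu)
    obtain ⟨k2, J2, hk2pos, hJ2oa, hJ2eq⟩ := h a haspan
    have hle2 : ∏ j, J2 j ≤ M := by
      rw [← hJ2eq, Ideal.span_singleton_le_iff_mem]; exact haM
    obtain ⟨i2, -, hi2⟩ := (Ideal.IsPrime.prod_le hM_prime).mp hle2
    have hJ2i : J2 i2 = M := by
      have hprime : (J2 i2).IsPrime := by
        by_contra hnp
        have hz2 : z ^ n ∈ M := hi2 (K1 (hJ2oa i2) hnp z hz_mem)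
        exact (not_mem_minimalPrime_of_regular hM_min hz_reg)
          (hM_prime.mem_of_pow_mem n hz2)
      exact le_antisymm hi2 (hM_min.2 ⟨hprime, bot_le⟩ hi2)
    have hMpM : M = Ideal.span {p} * M := by
      apply le_antisymm
      · intro a' ha'
        obtain ⟨a1, ha1⟩ := Ideal.mem_span_singleton'.mp (hM_le ha')
        have ha1M : a1 ∈ M := by
          rcases hM_prime.mem_or_mem (show a1 * p ∈ M from ha1 ▸ ha') with hh | hh
          · exact hh
          · exact absurd hh hpM
        rw [← ha1, mul_comm a1 p]
        exact Ideal.mul_mem_mul (Ideal.mem_span_singleton_self p) ha1M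
      · exact Ideal.mul_le_right
    have hkey : Ideal.span ({a} : Set R) = Ideal.span {p * a} := by
      calc Ideal.span ({a} : Set R) = ∏ j, J2 j := hJ2eq
      _ = J2 i2 * ∏ j ∈ Finset.univ.erase i2, J2 j :=
          (Finset.mul_prod_erase Finset.univ J2 (Finset.mem_univ i2)).symm
      _ = M * ∏ j ∈ Finset.univ.erase i2, J2 j := by rw [hJ2i]
      _ = (Ideal.span {p} * M) * ∏ j ∈ Finset.univ.erase i2, J2 j := by rw [← hMpM]
      _ = Ideal.span {p} * (M * ∏ j ∈ Finset.univ.erase i2, J2 j) := by rw [mul_assoc]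
      _ = Ideal.span {p} * (J2 i2 * ∏ j ∈ Finset.univ.erase i2, J2 j) := by rw [hJ2i]
      _ = Ideal.span {p} * ∏ j, J2 j := by
          rw [Finset.mul_prod_erase Finset.univ J2 (Finset.mem_univ i2)]
      _ = Ideal.span {p} * Ideal.span {a} := by rw [← hJ2eq]
      _ = Ideal.span {p * a} := Ideal.span_singleton_mul_span_singleton p a
    obtain ⟨t, ht⟩ := Ideal.mem_span_singleton'.mp (hkey ▸ Ideal.mem_span_singleton_self a)
    have hunit : IsUnit (1 - t * p) := by
      by_contra hnu
      have h1 : (1 : R) - t * p ∈ IsLocalRing.maximalIdeal R :=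
        (IsLocalRing.mem_maximalIdeal _).mpr hnu
      have h2 : t * p ∈ IsLocalRing.maximalIdeal R :=
        Ideal.mul_mem_left _ t hp_m
      have h3 : (1 : R) ∈ IsLocalRing.maximalIdeal R := by
        have h4 := Ideal.add_mem _ h1 h2
        rw [sub_add_cancel] at h4
        exact h4
      exact (IsLocalRing.maximalIdeal.isMaximal R).ne_top ((Ideal.eq_top_iff_one _).mpr h3)
    have hz0 : (1 - t * p) * a = 0 := by
      have : t * (p * a) = a := ht
      linear_combination -this
    exact ha0 ((hunit.mul_right_eq_zero).mp hz0)
  haveI hbp : (⊥ : Ideal R).IsPrime := hMbot ▸ hM_prime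
  haveI hnzd : NoZeroDivisors R := by
    constructor
    intro x y hxy
    rcases hbp.mem_or_mem (show x * y ∈ (⊥ : Ideal R) by simpa [Ideal.mem_bot] using hxy)
      with hh | hh
    · exact Or.inl (by simpa [Ideal.mem_bot] using hh)
    · exact Or.inr (by simpa [Ideal.mem_bot] using hh)
  haveI hdom : IsDomain R := NoZeroDivisors.to_isDomain R
  -- UFD
  have hUF : UniqueFactorizationMonoid R := by
    apply UniqueFactorizationMonoid.of_exists_prime_factors
    intro a ha0
    by_cases hau : IsUnit a
    · exact ⟨0, by simp, by simpa using (associated_one_iff_isUnit.mpr hau).symm⟩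
    have hareg : a ∈ nonZeroDivisors R := mem_nonZeroDivisors_of_ne_zero ha0
    obtain ⟨k3, J3, hk3pos, hJ3oa, hJ3eq⟩ := h a (by
      rw [Ne, Ideal.span_singleton_eq_top]; exact hau)
    obtain ⟨c3, hc3, hac⟩ := principal_factors k3 a hareg J3 hJ3eq
    have hc3_prime : ∀ i, Prime (c3 i) := by
      intro i
      have hprime : (J3 i).IsPrime := by
        by_contra hnp
        have hpn : p ^ n ∈ J3 i := K1 (hJ3oa i) hnp p hp_m
        rw [hc3 i, Ideal.mem_span_singleton] at hpn
        obtain ⟨j, hjn, hassoc⟩ := (dvd_prime_pow hp_elem n).mp hpn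
        rcases Nat.eq_zero_or_pos j with rfl | hj
        · rw [pow_zero] at hassoc
          exact (hJ3oa i).1 (by
            rw [hc3 i, Ideal.span_singleton_eq_top]
            exact associated_one_iff_isUnit.mp hassoc)
        · have hzn : z ^ n ∈ Ideal.span {c3 i} := hc3 i ▸ K1 (hJ3oa i) hnp z hz_mem
          rw [Ideal.span_singleton_eq_span_singleton.mpr hassoc, Ideal.mem_span_singleton] at hzn
          have hpz : p ∣ z ^ n := dvd_trans (dvd_pow_self p (by omega : j ≠ 0)) hzn
          have hpz2 : p ∣ z := hp_elem.dvd_of_dvd_pow hpz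
          obtain ⟨w, rfl⟩ := hpz2
          exact hzq (q.mul_mem_right w hpq)
      have hc30 : c3 i ≠ 0 := by
        rintro h0
        apply ha0
        have hzero : (∏ j, c3 j) = 0 := Finset.prod_eq_zero (Finset.mem_univ i) h0
        rw [hzero] at hac
        rw [← Ideal.span_singleton_eq_bot, hac, Ideal.span_singleton_eq_bot]
      exact (Ideal.span_singleton_prime hc30).mp (hc3 i ▸ hprime)
    refine ⟨Finset.univ.val.map c3, ?_, ?_⟩
    · intro b hb
      obtain ⟨i, -, rfl⟩ := Multiset.mem_map.mp hb
      exact hc3_prime i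
    · have hprodeq : (Finset.univ.val.map c3).prod = ∏ i, c3 i := rfl
      rw [hprodeq]
      exact (Ideal.span_singleton_eq_span_singleton.mp hac).symm
  exact ⟨hdom, hUF⟩
end

section
/- Let R be a local commutative ring with Krull dimension at least 2 such that every proper principal ideal of R has an n-OA-factorization. Then R is a unique factorization domain. -/
namespace Stmt8Aux

open IsLocalRing

variable {R : Type*} [CommRing R]

/-! ### Generic helpers -/

lemma mem_add_extract {I J : Ideal R} {x : R} (h : x ∈ I + J) :
    ∃ a ∈ I, ∃ b ∈ J, a + b = x := by
  rw [Submodule.add_eq_sup, Submodule.mem_sup] at h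
  exact h

lemma mem_add_left (I J : Ideal R) {x : R} (h : x ∈ I) : x ∈ I + J := by
  rw [Submodule.add_eq_sup]
  exact Submodule.mem_sup_left h

lemma mem_add_right (I J : Ideal R) {x : R} (h : x ∈ J) : x ∈ I + J := by
  rw [Submodule.add_eq_sup]
  exact Submodule.mem_sup_right h

lemma prod_le_factor {ι : Type*} [DecidableEq ι] {s : Finset ι} {f : ι → Ideal R} {j : ι}
    (hj : j ∈ s) : ∏ i ∈ s, f i ≤ f j := by
  rw [← Finset.mul_prod_erase s f hj]
  exact Ideal.mul_le_left

lemma prime_prod_mem {q : Ideal R} (hq : q.IsPrime) {ι : Type*} {s : Finset ι} {f : ι → R}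
    (h : (∏ i ∈ s, f i) ∈ q) : ∃ i ∈ s, f i ∈ q := by
  classical
  induction s using Finset.induction_on with
  | empty =>
    rw [Finset.prod_empty] at h
    exact absurd ((Ideal.eq_top_iff_one _).mpr h) hq.ne_top
  | @insert a s ha ih =>
    rw [Finset.prod_insert ha] at h
    rcases hq.mem_or_mem h with h' | h'
    · exact ⟨a, Finset.mem_insert_self a s, h'⟩
    · obtain ⟨i, hi, hfi⟩ := ih h'
      exact ⟨i, Finset.mem_insert_of_mem hi, hfi⟩

lemma nilrad_ne_top [Nontrivial R] : (nilradical R : Ideal R) ≠ ⊤ := by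
  intro hT
  have h1 : (1 : R) ∈ nilradical R := hT ▸ Submodule.mem_top
  obtain ⟨k, hk⟩ := mem_nilradical.mp h1
  rw [one_pow] at hk
  exact one_ne_zero hk

lemma mem_nilradical_of_pow {x : R} {k : ℕ} (hx : x ^ k ∈ nilradical R) :
    x ∈ nilradical R := by
  obtain ⟨j, hj⟩ := mem_nilradical.mp hx
  exact mem_nilradical.mpr ⟨k * j, by rw [pow_mul]; exact hj⟩

/-- Prime avoidance with one distinguished (possibly non-prime) extra ideal. -/
lemma avoid {ι : Type*} [DecidableEq ι] (s : Finset ι) (f : ι → Ideal R) (N' : Ideal R)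
    (hf : ∀ i ∈ s, (f i).IsPrime) (I : Ideal R) (hIN : ¬ I ≤ N') (hIf : ∀ i ∈ s, ¬ I ≤ f i) :
    ∃ x ∈ I, x ∉ N' ∧ ∀ i ∈ s, x ∉ f i := by
  classical
  set F : Option ι → Ideal R := fun o => o.elim N' f with hF
  set s' : Finset (Option ι) := insert none (s.image some) with hs'
  have hyp : ∀ i ∈ s', i ≠ none → i ≠ none → (F i).IsPrime := by
    intro i hi h1 _
    match i with
    | none => exact absurd rfl h1
    | some j =>
      have hj : j ∈ s := by
        rcases Finset.mem_insert.mp hi with h | h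
        · exact absurd h (by simp)
        · obtain ⟨a, ha, haj⟩ := Finset.mem_image.mp h
          rwa [← Option.some_inj.mp haj]
      exact hf j hj
  have hns : ¬ ((I : Set R) ⊆ ⋃ i ∈ (↑s' : Set (Option ι)), ↑(F i)) := by
    intro hsub
    obtain ⟨i, hi, hle⟩ := (Ideal.subset_union_prime none none hyp).mp hsub
    match i with
    | none => exact hIN hle
    | some j =>
      have hj : j ∈ s := by
        rcases Finset.mem_insert.mp hi with h | h
        · exact absurd h (by simp)
        · obtain ⟨a, ha, haj⟩ := Finset.mem_image.mp h
          rwa [← Option.some_inj.mp haj]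
      exact hIf j hj hle
  rw [Set.not_subset] at hns
  obtain ⟨x, hxI, hxn⟩ := hns
  have hxn' : ∀ i ∈ s', x ∉ F i := by
    intro i hi hxi
    exact hxn (Set.mem_biUnion hi hxi)
  refine ⟨x, hxI, hxn' none (Finset.mem_insert_self _ _), fun i hi => ?_⟩
  exact hxn' (some i) (Finset.mem_insert_of_mem (Finset.mem_image_of_mem some hi))

/-! ### Dichotomy -/

/-- A non-prime n-OA ideal contains every product of `n` nonunits. -/
lemma dichotomy {n : ℕ} (hn : 0 < n) {J : Ideal R} (hJ : IsNOAIdeal n J) (hnp : ¬J.IsPrime) :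
    ∀ c : Fin n → R, (∀ i, ¬IsUnit (c i)) → (∏ i, c i) ∈ J := by
  obtain ⟨k, rfl⟩ : ∃ k, n = k + 1 := ⟨n - 1, (Nat.succ_pred_eq_of_pos hn).symm⟩
  have hJt := hJ.1
  have h2 : ¬∀ x y : R, x * y ∈ J → x ∈ J ∨ y ∈ J := fun H => hnp ⟨hJt, fun {x y} hxy => H x y hxy⟩
  push_neg at h2
  obtain ⟨a, b, hab, haJ, hbJ⟩ := h2
  have hanu : ¬IsUnit a := by
    intro h
    apply hbJ
    have hmem : (↑h.unit⁻¹ : R) * (a * b) ∈ J := J.mul_mem_left _ hab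
    have he : (↑h.unit⁻¹ : R) * (a * b) = b := by
      rw [← mul_assoc, h.val_inv_mul, one_mul]
    rwa [he] at hmem
  have hbnu : ¬IsUnit b := by
    intro h
    apply haJ
    have hmem : (a * b) * (↑h.unit⁻¹ : R) ∈ J := J.mul_mem_right _ hab
    have he : (a * b) * (↑h.unit⁻¹ : R) = a := by
      rw [mul_assoc, h.mul_val_inv, mul_one]
    rwa [he] at hmem
  have hcast : ∀ (g : Fin (k+1) → R) (z : R),
      (∏ i : Fin (k+1), (Fin.snoc g z : Fin (k+2) → R) i.castSucc) = ∏ i, g i :=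
    fun g z => Finset.prod_congr rfl fun i _ => by rw [Fin.snoc_castSucc]
  have hfull : ∀ (g : Fin (k+1) → R) (z : R),
      (∏ i : Fin (k+2), (Fin.snoc g z : Fin (k+2) → R) i) = (∏ i, g i) * z :=
    fun g z => by rw [Fin.prod_univ_castSucc, hcast, Fin.snoc_last]
  intro c hc
  set Y : Fin (k+1) → R := Fin.snoc (fun i : Fin k => c i.castSucc) a with hY
  have hYprod : ∏ i : Fin (k+1), Y i = (∏ i : Fin k, c i.castSucc) * a := by
    rw [Fin.prod_univ_castSucc (f := Y)]
    congr 1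
    · exact Finset.prod_congr rfl fun i _ => by rw [hY, Fin.snoc_castSucc]
    · rw [hY, Fin.snoc_last]
  have hYnonunit : ∀ i, ¬IsUnit (Y i) := by
    intro i
    refine Fin.lastCases ?_ (fun j => ?_) i
    · rw [hY, Fin.snoc_last]; exact hanu
    · rw [hY, Fin.snoc_castSucc]; exact hc _
  have step1 : (∏ i : Fin k, c i.castSucc) * a ∈ J := by
    have happ := hJ.2 (Fin.snoc Y b) ?_ ?_
    · rcases happ with h | h
      · rwa [hcast, hYprod] at h
      · rw [Fin.snoc_last] at h; exact absurd h hbJ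
    · intro i
      refine Fin.lastCases ?_ (fun j => ?_) i
      · rw [Fin.snoc_last]; exact hbnu
      · rw [Fin.snoc_castSucc]; exact hYnonunit j
    · rw [hfull, hYprod, mul_assoc]
      exact J.mul_mem_left _ hab
  have happ := hJ.2 (Fin.snoc c a) ?_ ?_
  · rcases happ with h | h
    · rwa [hcast] at h
    · rw [Fin.snoc_last] at h; exact absurd h haJ
  · intro i
    refine Fin.lastCases ?_ (fun j => ?_) i
    · rw [Fin.snoc_last]; exact hanu
    · rw [Fin.snoc_castSucc]; exact hc _
  · rw [hfull]
    have he : (∏ i, c i) * a = ((∏ i : Fin k, c i.castSucc) * a) * c (Fin.last k) := by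
      rw [Fin.prod_univ_castSucc (f := c)]; ring
    rw [he]
    exact J.mul_mem_right _ step1

end Stmt8Aux

namespace Stmt8Aux

variable {R : Type*} [CommRing R]

section LocalStar

variable [IsLocalRing R]

open IsLocalRing

lemma unit_one_sub {t : R} (ht : t ∈ maximalIdeal R) : IsUnit (1 - t) := by
  by_contra hu
  have h1 : (1 : R) = (1 - t) + t := by ring
  have hm : (1 : R) ∈ maximalIdeal R := by
    rw [h1]
    exact Ideal.add_mem _ ((mem_maximalIdeal _).mpr hu) ht
  exact (maximalIdeal.isMaximal R).ne_top ((Ideal.eq_top_iff_one _).mpr hm)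

lemma nonunit_mem {x : R} (hx : ¬IsUnit x) : x ∈ maximalIdeal R :=
  (mem_maximalIdeal _).mpr hx

/-- Quasi-principality of a factor of a nonzero principal ideal. -/
lemma starFactor {x : R} (hx : x ≠ 0) {I K : Ideal R} (hIK : I * K = Ideal.span {x}) :
    ∃ y ∈ I, (∃ b, x = y * b) ∧ ∀ a ∈ I, ∃ g η, a = y * g + η ∧ η * x = 0 := by
  by_cases H : ∃ a ∈ I, ∃ b ∈ K, ∃ t, a * b = x * t ∧ IsUnit t
  · obtain ⟨y, hyI, b, hbK, t, hab, htu⟩ := H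
    refine ⟨y, hyI, ⟨b * ↑htu.unit⁻¹, ?_⟩, ?_⟩
    · have he : y * (b * ↑htu.unit⁻¹) = (x * t) * ↑htu.unit⁻¹ := by rw [← hab]; ring
      rw [he, mul_assoc, htu.mul_val_inv, mul_one]
    · intro a ha
      have h1 : a * b ∈ Ideal.span {x} := by
        rw [← hIK]; exact Ideal.mul_mem_mul ha hbK
      obtain ⟨d, hd⟩ := Ideal.mem_span_singleton'.mp h1
      have key : (a * t - y * d) * x = 0 := by
        have e1 : a * (x * t) = a * (y * b) := by rw [hab]
        have e2 : y * (a * b) = y * (d * x) := by rw [hd]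
        calc (a * t - y * d) * x = a * (x * t) - y * (d * x) := by ring
        _ = a * (y * b) - y * (a * b) := by rw [e1, e2]
        _ = 0 := by ring
      refine ⟨d * ↑htu.unit⁻¹, (a * t - y * d) * ↑htu.unit⁻¹, ?_, ?_⟩
      · have he : y * (d * ↑htu.unit⁻¹) + (a * t - y * d) * ↑htu.unit⁻¹
            = (a * t) * ↑htu.unit⁻¹ := by ring
        rw [he, mul_assoc, htu.mul_val_inv, mul_one]
      · rw [mul_comm (a * t - y * d) (↑htu.unit⁻¹ : R), mul_assoc, key, mul_zero]
  · exfalso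
    push_neg at H
    have hx_mem : x ∈ I * K := by rw [hIK]; exact Ideal.mem_span_singleton_self x
    have P : ∀ z ∈ I * K, ∃ t, z = x * t ∧ t ∈ maximalIdeal R := by
      intro z hz
      refine Submodule.mul_induction_on hz ?_ ?_
      · intro a ha b hb
        have h1 : a * b ∈ Ideal.span {x} := by
          rw [← hIK]; exact Ideal.mul_mem_mul ha hb
        obtain ⟨t, ht⟩ := Ideal.mem_span_singleton'.mp h1
        refine ⟨t, by rw [← ht]; ring, ?_⟩
        by_contra htm
        have htu : IsUnit t := by
          by_contra hz2
          exact htm (nonunit_mem hz2)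
        exact (H a ha b hb t (by rw [← ht]; ring) htu)
      · rintro z w ⟨t1, h1, hm1⟩ ⟨t2, h2, hm2⟩
        exact ⟨t1 + t2, by rw [h1, h2]; ring, Ideal.add_mem _ hm1 hm2⟩
    obtain ⟨t, hxt, htm⟩ := P x hx_mem
    have h0 : x * (1 - t) = 0 := by rw [mul_sub, mul_one, ← hxt]; ring
    have hu := unit_one_sub htm
    apply hx
    calc x = x * ((1-t) * ↑hu.unit⁻¹) := by rw [hu.mul_val_inv, mul_one]
    _ = (x * (1-t)) * ↑hu.unit⁻¹ := by ring
    _ = 0 := by rw [h0, zero_mul]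

/-- The star lemma: if `span {x} = ∏ J i` with `x² ≠ 0`, then `x` is a unit times a product
of elements `y i ∈ J i`, each of which quasi-generates `J i`. -/
lemma starGlobal {x : R} (hx2 : x * x ≠ 0) {r : ℕ} {J : Fin r → Ideal R}
    (hprod : Ideal.span {x} = ∏ i, J i) :
    ∃ (y : Fin r → R) (u : Rˣ), x = ↑u * ∏ i, y i ∧
      ∀ i, y i ∈ J i ∧ (∃ b, x = y i * b) ∧ ∀ a ∈ J i, ∃ g η, a = y i * g + η ∧ η * x = 0 := by
  classical
  have hx : x ≠ 0 := fun h => hx2 (by rw [h, zero_mul])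
  have perF : ∀ i, ∃ y, y ∈ J i ∧ (∃ b, x = y * b) ∧
      ∀ a ∈ J i, ∃ g η, a = y * g + η ∧ η * x = 0 := by
    intro i
    have hIK : J i * (∏ j ∈ Finset.univ.erase i, J j) = Ideal.span {x} := by
      rw [Finset.mul_prod_erase Finset.univ J (Finset.mem_univ i), hprod]
    obtain ⟨y, h1, h2, h3⟩ := starFactor hx hIK
    exact ⟨y, h1, h2, h3⟩
  choose y hyJ hydvd hyrep using perF
  have glob : ∀ s : Finset (Fin r), ∀ z ∈ ∏ i ∈ s, J i,
      ∃ g η, z = (∏ i ∈ s, y i) * g + η ∧ η * x = 0 := by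
    intro s
    induction s using Finset.induction_on with
    | empty =>
      intro z _
      exact ⟨z, 0, by simp, by simp⟩
    | @insert a s hnotmem ih =>
      intro z hz
      rw [Finset.prod_insert hnotmem] at hz
      refine Submodule.mul_induction_on hz ?_ ?_
      · intro p hp w hw
        obtain ⟨g1, η1, hpe, hη1⟩ := hyrep a p hp
        obtain ⟨g2, η2, hwe, hη2⟩ := ih w hw
        refine ⟨g1 * g2, y a * g1 * η2 + η1 * w, ?_, ?_⟩
        · rw [Finset.prod_insert hnotmem, hpe, hwe]; ring
        · calc (y a * g1 * η2 + η1 * w) * x = y a * g1 * (η2 * x) + (η1 * x) * w := by ring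
          _ = 0 := by rw [hη1, hη2]; ring
      · rintro z1 z2 ⟨g1, η1, e1, f1⟩ ⟨g2, η2, e2, f2⟩
        exact ⟨g1 + g2, η1 + η2, by rw [e1, e2]; ring, by rw [add_mul, f1, f2, add_zero]⟩
  have hxIn : x ∈ ∏ i, J i := by rw [← hprod]; exact Ideal.mem_span_singleton_self x
  obtain ⟨e, η, hxe, hηx⟩ := glob Finset.univ x hxIn
  have hy_mem : (∏ i, y i) ∈ Ideal.span {x} := by
    rw [hprod]; exact Ideal.prod_mem_prod (fun i _ => hyJ i)
  obtain ⟨f, hf⟩ := Ideal.mem_span_singleton'.mp hy_mem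
  have hxx : x * x = x * x * (f * e) := by
    calc x * x = x * ((∏ i, y i) * e + η) := by rw [← hxe]
    _ = x * (∏ i, y i) * e + η * x := by ring
    _ = x * (f * x) * e + 0 := by rw [hf, hηx]
    _ = x * x * (f * e) := by ring
  have hfe : IsUnit (f * e) := by
    by_contra hfe
    have hu := unit_one_sub ((mem_maximalIdeal _).mpr hfe)
    apply hx2
    have h0 : x * x * (1 - f * e) = 0 := by rw [mul_sub, mul_one, ← hxx]; ring
    calc x * x = x * x * ((1 - f*e) * ↑hu.unit⁻¹) := by rw [hu.mul_val_inv, mul_one]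
    _ = (x * x * (1 - f*e)) * ↑hu.unit⁻¹ := by ring
    _ = 0 := by rw [h0, zero_mul]
  have hfu : IsUnit f := isUnit_of_mul_isUnit_left hfe
  refine ⟨y, hfu.unit⁻¹, ?_, fun i => ⟨hyJ i, hydvd i, hyrep i⟩⟩
  calc x = ↑hfu.unit⁻¹ * (f * x) := by rw [← mul_assoc, hfu.val_inv_mul, one_mul]
  _ = ↑hfu.unit⁻¹ * ∏ i, y i := by rw [hf]

end LocalStar

end Stmt8Aux

namespace Stmt8Aux

open IsLocalRing

section Context

variable {R : Type*} [CommRing R] [IsLocalRing R]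

lemma goodAnn {x : R} (hx : ∀ P ∈ minimalPrimes R, x ∉ P) :
    ∀ (k : ℕ) (z : R), z * x ^ k = 0 → z ∈ nilradical R := by
  intro k z hz
  rw [nilradical_eq_sInf, Ideal.mem_sInf]
  intro J hJ
  haveI : J.IsPrime := hJ
  obtain ⟨Q, hQ, hQJ⟩ := Ideal.exists_minimalPrimes_le (bot_le : (⊥ : Ideal R) ≤ J)
  have hQp : Q.IsPrime := hQ.1.1
  have h0 : z * x ^ k ∈ Q := by rw [hz]; exact Q.zero_mem
  rcases hQp.mem_or_mem h0 with h' | h'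
  · exact hQJ h'
  · exact absurd (hQp.mem_of_pow_mem k h') (hx Q hQ)

variable {n : ℕ} (hn : 0 < n)
  {π₀ p1 : Ideal R} (hπ₀ : π₀.IsPrime) (hp1 : p1.IsPrime) (h01 : π₀ < p1)
  (hp1m : p1 ≠ maximalIdeal R)

include hn hπ₀ hp1 h01 hp1m

omit hp1m in
/-- Any n-OA ideal contained in a minimal prime equals it. -/
lemma facEqMin : ∀ Q ∈ minimalPrimes R, ∀ J' : Ideal R, IsNOAIdeal n J' → J' ≤ Q → J' = Q := by
  intro Q hQ J' hJ' hle
  have hQp : Q.IsPrime := hQ.1.1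
  have hQm : ¬ (maximalIdeal R ≤ Q) := by
    intro hmQ
    have hπ₀m : π₀ ≤ maximalIdeal R := le_trans (le_of_lt h01) (le_maximalIdeal hp1.ne_top)
    have hQπ₀ : Q ≤ π₀ := hQ.2 ⟨hπ₀, bot_le⟩ (le_trans hπ₀m hmQ)
    have hcon : p1 ≤ π₀ := le_trans (le_trans (le_maximalIdeal hp1.ne_top) hmQ) hQπ₀
    exact absurd (lt_of_lt_of_le h01 hcon) (lt_irrefl π₀)
  by_cases hp : J'.IsPrime
  · haveI := hp
    obtain ⟨Q', hQ', hQ'J⟩ := Ideal.exists_minimalPrimes_le (bot_le : (⊥ : Ideal R) ≤ J')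
    have h1 : Q ≤ Q' := hQ.2 ⟨hQ'.1.1, bot_le⟩ (le_trans hQ'J hle)
    exact le_antisymm hle (le_trans h1 hQ'J)
  · exfalso
    obtain ⟨c₀, hc₀m, hc₀Q⟩ := SetLike.not_le_iff_exists.mp hQm
    have hcnu : ¬IsUnit c₀ := (mem_maximalIdeal _).mp hc₀m
    have hmem := dichotomy hn hJ' hp (fun _ => c₀) (fun _ => hcnu)
    rw [Finset.prod_const, Finset.card_univ, Fintype.card_fin] at hmem
    exact hc₀Q (hQp.mem_of_pow_mem n (hle hmem))

omit hp1m in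
lemma minEnum {r₀ : ℕ} {J0 : Fin r₀ → Ideal R} (hJ0 : ∀ i, IsNOAIdeal n (J0 i))
    (h0 : (⊥ : Ideal R) = ∏ i, J0 i) : ∀ Q ∈ minimalPrimes R, ∃ i, J0 i = Q := by
  intro Q hQ
  have hQp : Q.IsPrime := hQ.1.1
  have hle : (∏ i, J0 i) ≤ Q := h0 ▸ bot_le
  obtain ⟨i, _, hi⟩ := (hQp.prod_le).mp hle
  exact ⟨i, facEqMin hn hπ₀ hp1 h01 Q hQ _ (hJ0 i) hi⟩

variable (hH : ∀ x : R, Ideal.span {x} ≠ ⊤ → HasNOAFactorization n (Ideal.span {x}))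

include hH

omit hp1m in
lemma exists_d : ∃ d, d ∈ p1 ∧ ∀ P ∈ minimalPrimes R, d ∉ P := by
  classical
  have hsp0 : Ideal.span {(0:R)} ≠ ⊤ :=
    fun hT => not_isUnit_zero (Ideal.span_singleton_eq_top.mp hT)
  obtain ⟨r₀, J0, hr₀, hJ0, hspan0⟩ := hH 0 hsp0
  rw [Ideal.span_singleton_eq_bot.mpr rfl] at hspan0
  set bd := Finset.univ.filter (fun i => (J0 i).IsPrime ∧ ¬ p1 ≤ J0 i) with hbd
  have hprime : ∀ i ∈ bd, (J0 i).IsPrime := fun i hi => (Finset.mem_filter.mp hi).2.1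
  have hnotle : ∀ i ∈ bd, ¬ p1 ≤ J0 i := fun i hi => (Finset.mem_filter.mp hi).2.2
  have hp1bot : ¬ p1 ≤ (⊥ : Ideal R) := by
    intro hle
    have : π₀ < (⊥ : Ideal R) := lt_of_lt_of_le h01 hle
    exact absurd bot_le (not_le_of_gt this)
  obtain ⟨d, hdp1, _, hdf⟩ := avoid bd J0 ⊥ hprime p1 hp1bot hnotle
  refine ⟨d, hdp1, ?_⟩
  intro P hP hdP
  obtain ⟨i, hiP⟩ := minEnum hn hπ₀ hp1 h01 hJ0 hspan0 P hP
  have hibd : i ∈ bd := by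
    rw [hbd, Finset.mem_filter]
    refine ⟨Finset.mem_univ i, by rw [hiP]; exact hP.1.1, ?_⟩
    rw [hiP]
    intro hPle
    have hPp1 : P ≤ p1 := hP.2 ⟨hp1, bot_le⟩ hPle
    have hPeq : P = p1 := le_antisymm hPp1 hPle
    have : p1 ≤ π₀ := by
      rw [← hPeq]
      exact hP.2 ⟨hπ₀, bot_le⟩ (le_trans (le_of_lt h01) (hPeq ▸ le_refl P))
    exact absurd (lt_of_lt_of_le h01 this) (lt_irrefl π₀)
  exact hdf i hibd (by rw [hiP]; exact hdP)

lemma ydPack : ∃ yd : R, ¬IsUnit yd ∧ (∀ P ∈ minimalPrimes R, yd ∉ P) ∧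
    (Ideal.span {yd} + nilradical R).IsPrime ∧ Ideal.span {yd} + nilradical R ≤ p1 := by
  classical
  obtain ⟨d, hdp1, hdgood⟩ := exists_d hn hπ₀ hp1 h01 hH
  have hdnu : ¬IsUnit d := by
    intro hu
    exact hp1.ne_top (Ideal.eq_top_of_isUnit_mem _ hdp1 hu)
  have hd0 : d ≠ 0 := by
    haveI := hπ₀
    obtain ⟨Q, hQ, _⟩ := Ideal.exists_minimalPrimes_le (bot_le : (⊥ : Ideal R) ≤ π₀)
    intro he
    exact hdgood Q hQ (he ▸ Q.zero_mem)
  obtain ⟨r, J, hr, hJ, hspan⟩ := hH d (fun hT => hdnu (Ideal.span_singleton_eq_top.mp hT))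
  have hsub : (∏ i, J i) ≤ p1 := by
    rw [← hspan]
    exact (Ideal.span_le).mpr (by simpa using hdp1)
  obtain ⟨i₂, _, hi₂⟩ := (hp1.prod_le).mp hsub
  obtain ⟨c₁, hc₁m, hc₁p⟩ : ∃ c₁ ∈ maximalIdeal R, c₁ ∉ p1 := by
    apply SetLike.not_le_iff_exists.mp
    intro hle
    exact hp1m (le_antisymm (le_maximalIdeal hp1.ne_top) hle)
  have hJp : (J i₂).IsPrime := by
    by_contra hnp
    have hmem := dichotomy hn (hJ i₂) hnp (fun _ => c₁) (fun _ => (mem_maximalIdeal _).mp hc₁m)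
    rw [Finset.prod_const, Finset.card_univ, Fintype.card_fin] at hmem
    exact hc₁p (hp1.mem_of_pow_mem n (hi₂ hmem))
  have hIK : J i₂ * (∏ j ∈ Finset.univ.erase i₂, J j) = Ideal.span {d} := by
    rw [Finset.mul_prod_erase Finset.univ J (Finset.mem_univ i₂)]
    exact hspan.symm
  obtain ⟨y, hyJ, ⟨b, hdb⟩, hrep⟩ := starFactor hd0 hIK
  have hygood : ∀ P ∈ minimalPrimes R, y ∉ P := by
    intro P hP hyP
    exact hdgood P hP (hdb ▸ Ideal.mul_mem_right b P hyP)
  have hynu : ¬IsUnit y := by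
    intro hu
    exact (hJ i₂).1 (Ideal.eq_top_of_isUnit_mem _ hyJ hu)
  have hQeq : Ideal.span {y} + nilradical R = J i₂ := by
    apply le_antisymm
    · rw [Submodule.add_eq_sup]
      apply sup_le
      · rw [Ideal.span_le]
        simpa using hyJ
      · haveI := hJp
        exact nilradical_le_prime (J i₂)
    · intro a ha
      obtain ⟨g, η, hae, hηd⟩ := hrep a ha
      have hηN : η ∈ nilradical R := goodAnn hdgood 1 η (by rw [pow_one]; exact hηd)
      rw [hae]
      exact Ideal.add_mem _
        (mem_add_left _ _ (Ideal.mul_mem_right g _ (Ideal.mem_span_singleton_self y)))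
        (mem_add_right _ _ hηN)
  exact ⟨y, hynu, hygood, hQeq ▸ hJp, hQeq ▸ hi₂⟩

end Context

end Stmt8Aux

namespace Stmt8Aux

open IsLocalRing

section Context2

variable {R : Type*} [CommRing R] [IsLocalRing R]
variable {n : ℕ} (hn : 0 < n)
  {π₀ p1 : Ideal R} (hπ₀ : π₀.IsPrime) (hp1 : p1.IsPrime) (h01 : π₀ < p1)
  (hp1m : p1 ≠ maximalIdeal R)
  {yd : R} (hydnu : ¬IsUnit yd) (hydgood : ∀ P ∈ minimalPrimes R, yd ∉ P)
  (hydpr : (Ideal.span {yd} + nilradical R).IsPrime)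
  (hydle : Ideal.span {yd} + nilradical R ≤ p1)

include hn hydnu hydgood hydpr hydle

omit hn in
/-- Descent: no "special" quasi-generator can exist. -/
lemma killSpecial {z : R} (hznu : ¬IsUnit z) (hzp1 : z ∉ p1)
    (hin : ∀ c : Fin n → R, (∀ i, ¬IsUnit (c i)) → (∏ i, c i) ∈ Ideal.span {z} + nilradical R) :
    False := by
  set q := Ideal.span {yd} + nilradical R with hq
  have hydq : yd ∈ q := mem_add_left _ _ (Ideal.mem_span_singleton_self yd)
  have hzq : z ∉ q := fun hz => hzp1 (hydle hz)
  have desc : ∀ l : ℕ, l ≤ n → yd ^ (n - l) ∈ Ideal.span {z} + nilradical R := by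
    intro l
    induction l with
    | zero =>
      intro _
      have hmem := hin (fun _ => yd) (fun _ => hydnu)
      rw [Finset.prod_const, Finset.card_univ, Fintype.card_fin] at hmem
      simpa using hmem
    | succ l ih =>
      intro hl
      have hprev := ih (Nat.le_of_succ_le hl)
      have hnl : n - l = (n - (l+1)) + 1 := by omega
      obtain ⟨w1, hw1, η, hη, hsum⟩ := mem_add_extract hprev
      obtain ⟨g, hg⟩ := Ideal.mem_span_singleton'.mp hw1
      have hzgq : z * g ∈ q := by
        have h1 : yd ^ (n - l) ∈ q := by
          rw [hnl, pow_succ]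
          exact q.mul_mem_left _ hydq
        have hη' : η ∈ q := by
          haveI := hydpr
          rw [hq]
          exact (nilradical_le_prime _) hη
        have hw1q : w1 ∈ q := by
          have he : w1 = yd ^ (n - l) - η := by rw [← hsum]; ring
          rw [he]
          exact Ideal.sub_mem _ h1 hη'
        have he2 : z * g = w1 := by rw [← hg]; ring
        rwa [he2]
      have hgq : g ∈ q := (hydpr.mem_or_mem hzgq).resolve_left hzq
      obtain ⟨g1, hg1, η', hη', hgsum⟩ := mem_add_extract hgq
      obtain ⟨g', hg'⟩ := Ideal.mem_span_singleton'.mp hg1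
      set ξ := yd ^ (n - (l+1)) - z * g' with hξ
      have hξyd : yd * ξ ∈ nilradical R := by
        have e2 : yd ^ (n-l) - z * g = η := by rw [← hsum, ← hg]; ring
        have e : yd * ξ = η + z * η' := by
          have e3 : g = g' * yd + η' := by rw [← hgsum, ← hg']
          calc yd * ξ = yd ^ ((n - (l+1)) + 1) - z * (g' * yd) := by rw [hξ, pow_succ]; ring
          _ = yd ^ (n - l) - z * (g - η') := by rw [← hnl, e3]; ring
          _ = (yd ^ (n-l) - z * g) + z * η' := by ring
          _ = η + z * η' := by rw [e2]
        rw [e]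
        exact Ideal.add_mem _ hη ((nilradical R).mul_mem_left z hη')
      have hξN : ξ ∈ nilradical R := by
        obtain ⟨k, hk⟩ := mem_nilradical.mp hξyd
        have hzk : ξ ^ k * yd ^ k = 0 := by
          rw [← mul_pow, mul_comm ξ yd, hk]
        exact mem_nilradical_of_pow (goodAnn hydgood k (ξ^k) hzk)
      have he : yd ^ (n-(l+1)) = z * g' + ξ := by rw [hξ]; ring
      rw [he]
      exact Ideal.add_mem _
        (mem_add_left _ _ (Ideal.mul_mem_right g' _ (Ideal.mem_span_singleton_self z)))
        (mem_add_right _ _ hξN)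
  have h1 := desc n (le_refl n)
  rw [Nat.sub_self, pow_zero] at h1
  obtain ⟨w1, hw1, η, hη, hsum⟩ := mem_add_extract h1
  obtain ⟨g, hg⟩ := Ideal.mem_span_singleton'.mp hw1
  have hηm : η ∈ maximalIdeal R := le_maximalIdeal nilrad_ne_top hη
  have hu := unit_one_sub hηm
  apply hznu
  refine IsUnit.of_mul_eq_one (a := z) (g * ↑hu.unit⁻¹) ?_
  have e : g * z = 1 - η := by rw [hg, ← hsum]; ring
  calc z * (g * ↑hu.unit⁻¹) = (g * z) * ↑hu.unit⁻¹ := by ring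
  _ = (1 - η) * ↑hu.unit⁻¹ := by rw [e]
  _ = 1 := hu.mul_val_inv

include hπ₀ hp1 h01 hp1m in
/-- Master factorization: every "good" element is a unit times a product of elements whose
spans-plus-nilradical are prime. -/
lemma masterFac (hH : ∀ x : R, Ideal.span {x} ≠ ⊤ → HasNOAFactorization n (Ideal.span {x}))
    (x : R) (hxnu : ¬IsUnit x) (hxgood : ∀ P ∈ minimalPrimes R, x ∉ P) :
    ∃ (r : ℕ) (y : Fin r → R) (u : Rˣ), 0 < r ∧ x = ↑u * ∏ i, y i ∧
      Ideal.span {x} = ∏ i, (Ideal.span {y i} + nilradical R) ∧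
      ∀ i, ¬IsUnit (y i) ∧ (∀ P ∈ minimalPrimes R, y i ∉ P) ∧
        (Ideal.span {y i} + nilradical R).IsPrime := by
  classical
  haveI := hπ₀
  obtain ⟨Qm, hQm, _⟩ := Ideal.exists_minimalPrimes_le (bot_le : (⊥ : Ideal R) ≤ π₀)
  have hx0 : x ≠ 0 := fun he => hxgood Qm hQm (he ▸ Qm.zero_mem)
  have hx2 : x * x ≠ 0 := by
    intro he
    have hnil : x ∈ nilradical R := mem_nilradical.mpr ⟨2, by rw [pow_two]; exact he⟩
    haveI := hQm.1.1
    exact hxgood Qm hQm ((nilradical_le_prime Qm) hnil)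
  obtain ⟨r, J, hr, hJOA, hspan⟩ := hH x (fun hT => hxnu (Ideal.span_singleton_eq_top.mp hT))
  obtain ⟨y, u, hxu, hdata⟩ := starGlobal hx2 hspan
  obtain ⟨c₁, hc₁m, hc₁p⟩ : ∃ c₁ ∈ maximalIdeal R, c₁ ∉ p1 := by
    apply SetLike.not_le_iff_exists.mp
    intro hle
    exact hp1m (le_antisymm (le_maximalIdeal hp1.ne_top) hle)
  have hygood : ∀ i, ∀ P ∈ minimalPrimes R, y i ∉ P := by
    intro i P hP hyP
    obtain ⟨_, ⟨b, hxb⟩, _⟩ := hdata i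
    exact hxgood P hP (hxb ▸ Ideal.mul_mem_right b P hyP)
  have hynu : ∀ i, ¬IsUnit (y i) := by
    intro i hu2
    exact (hJOA i).1 (Ideal.eq_top_of_isUnit_mem _ (hdata i).1 hu2)
  have hJiN : ∀ i, ∀ a ∈ J i, a ∈ Ideal.span {y i} + nilradical R := by
    intro i a ha
    obtain ⟨_, _, hrep⟩ := hdata i
    obtain ⟨g, η, hae, hηx⟩ := hrep a ha
    have hη : η ∈ nilradical R := goodAnn hxgood 1 η (by rw [pow_one]; exact hηx)
    rw [hae]
    exact Ideal.add_mem _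
      (mem_add_left _ _ (Ideal.mul_mem_right g _ (Ideal.mem_span_singleton_self (y i))))
      (mem_add_right _ _ hη)
  have hallp : ∀ i, (J i).IsPrime := by
    intro i
    by_contra hnp
    have hsp := dichotomy hn (hJOA i) hnp
    have hJinotp1 : ¬ J i ≤ p1 := by
      intro hle
      have hmem := hsp (fun _ => c₁) (fun _ => (mem_maximalIdeal _).mp hc₁m)
      rw [Finset.prod_const, Finset.card_univ, Fintype.card_fin] at hmem
      exact hc₁p (hp1.mem_of_pow_mem n (hle hmem))
    have hzp1 : y i ∉ p1 := by
      intro hyp1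
      apply hJinotp1
      intro a ha
      obtain ⟨w1, hw1, η, hη, hsum⟩ := mem_add_extract (hJiN i a ha)
      obtain ⟨g, hg⟩ := Ideal.mem_span_singleton'.mp hw1
      have hηp1 : η ∈ p1 := (nilradical_le_prime p1) hη
      have hw1p1 : w1 ∈ p1 := by rw [← hg]; exact p1.mul_mem_left g hyp1
      rw [← hsum]
      exact Ideal.add_mem _ hw1p1 hηp1
    exact killSpecial hydnu hydgood hydpr hydle (hynu i) hzp1
      (fun c hc => hJiN i _ (hsp c hc))
  have hJeq : ∀ i, J i = Ideal.span {y i} + nilradical R := by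
    intro i
    apply le_antisymm
    · intro a ha
      exact hJiN i a ha
    · rw [Submodule.add_eq_sup]
      apply sup_le
      · rw [Ideal.span_le]
        simpa using (hdata i).1
      · haveI := hallp i
        exact nilradical_le_prime (J i)
  refine ⟨r, y, u, hr, hxu, ?_, fun i => ⟨hynu i, hygood i, (hJeq i) ▸ hallp i⟩⟩
  rw [hspan]
  exact Finset.prod_congr rfl (fun i _ => hJeq i)

end Context2

end Stmt8Aux

namespace Stmt8Aux

open IsLocalRing

section Context3

variable {R : Type*} [CommRing R] [IsLocalRing R]
variable {n : ℕ} (hn : 0 < n)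
  {π₀ p1 : Ideal R} (hπ₀ : π₀.IsPrime) (hp1 : p1.IsPrime) (h01 : π₀ < p1)
  (hp1m : p1 ≠ maximalIdeal R)
  (hH : ∀ x : R, Ideal.span {x} ≠ ⊤ → HasNOAFactorization n (Ideal.span {x}))

include hn hπ₀ hp1 h01 hp1m hH

/-- Stage 1: the nilradical is prime. -/
lemma Nprime : (nilradical R).IsPrime := by
  classical
  haveI := hπ₀
  obtain ⟨P, hPmem, hPπ₀⟩ := Ideal.exists_minimalPrimes_le (bot_le : (⊥ : Ideal R) ≤ π₀)
  have hPp : P.IsPrime := hPmem.1.1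
  by_cases hPN : P ≤ nilradical R
  · have he : nilradical R = P := le_antisymm ((nilradical_le_prime P)) hPN
    rw [he]
    exact hPp
  · exfalso
    -- yd pack
    obtain ⟨yd, hydnu, hydgood, hydpr, hydle⟩ := ydPack hn hπ₀ hp1 h01 hp1m hH
    -- factorization of zero
    have hsp0 : Ideal.span {(0:R)} ≠ ⊤ :=
      fun hT => not_isUnit_zero (Ideal.span_singleton_eq_top.mp hT)
    obtain ⟨r₀, J0, hr₀, hJ0, hspan0⟩ := hH 0 hsp0
    rw [Ideal.span_singleton_eq_bot.mpr rfl] at hspan0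
    have hfacP : ∀ J' : Ideal R, IsNOAIdeal n J' → J' ≤ P → J' = P :=
      fun J' h1 h2 => facEqMin hn hπ₀ hp1 h01 P hPmem J' h1 h2
    set T := Finset.univ.filter (fun i => J0 i = P) with hT
    have hTne : T.Nonempty := by
      have hle : (∏ i, J0 i) ≤ P := hspan0 ▸ bot_le
      obtain ⟨i, _, hi⟩ := (hPp.prod_le).mp hle
      exact ⟨i, Finset.mem_filter.mpr ⟨Finset.mem_univ i, hfacP _ (hJ0 i) hi⟩⟩
    set W := ∏ i ∈ Finset.univ.filter (fun i => ¬ J0 i = P), J0 i with hW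
    have hsplit : (⊥ : Ideal R) = P ^ T.card * W := by
      rw [hspan0, ← Finset.prod_filter_mul_prod_filter_not Finset.univ (fun i => J0 i = P) J0]
      congr 1
      rw [Finset.prod_congr rfl (fun i hi => (Finset.mem_filter.mp hi).2), Finset.prod_const]
    by_cases hWe : (Finset.univ.filter (fun i => ¬ J0 i = P)) = ∅
    · apply hPN
      intro p hp
      have hpk : p ^ T.card ∈ P ^ T.card := Ideal.pow_mem_pow hp _
      have hzero : p ^ T.card = 0 := by
        have hb : P ^ T.card * W = ⊥ := hsplit.symm
        rw [hW, hWe, Finset.prod_empty, mul_one] at hb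
        exact (Submodule.mem_bot R).mp (hb ▸ hpk)
      exact mem_nilradical.mpr ⟨T.card, hzero⟩
    · have hWne : (Finset.univ.filter (fun i => ¬ J0 i = P)).Nonempty :=
        Finset.nonempty_iff_ne_empty.mpr hWe
      have hWnotle : ¬ W ≤ P := by
        intro hle
        obtain ⟨i, hi, hile⟩ := (hPp.prod_le).mp hle
        exact (Finset.mem_filter.mp hi).2 (hfacP _ (hJ0 i) hile)
      have hWm : W ≤ maximalIdeal R := by
        obtain ⟨i₁, hi₁⟩ := hWne
        exact le_trans (prod_le_factor hi₁) (le_maximalIdeal (hJ0 i₁).1)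
      obtain ⟨ω, hωW, hωP⟩ := SetLike.not_le_iff_exists.mp hWnotle
      set bd := Finset.univ.filter (fun i => (J0 i).IsPrime ∧ ¬ P ≤ J0 i) with hbd
      obtain ⟨s₀, hs₀P, hs₀N, hs₀f⟩ := avoid bd J0 (nilradical R)
        (fun i hi => (Finset.mem_filter.mp hi).2.1) P hPN
        (fun i hi => (Finset.mem_filter.mp hi).2.2)
      have hs₀Q : ∀ Q ∈ minimalPrimes R, Q ≠ P → s₀ ∉ Q := by
        intro Q hQ hQP hsQ
        obtain ⟨i, hiQ⟩ := minEnum hn hπ₀ hp1 h01 hJ0 hspan0 Q hQ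
        have hibd : i ∈ bd := by
          rw [hbd, Finset.mem_filter]
          refine ⟨Finset.mem_univ i, by rw [hiQ]; exact hQ.1.1, ?_⟩
          rw [hiQ]
          intro hPQ
          exact hQP (le_antisymm (hQ.2 ⟨hPp, bot_le⟩ hPQ) hPQ)
        exact hs₀f i hibd (by rw [hiQ]; exact hsQ)
      have hs₀0 : s₀ ≠ 0 := fun he => hs₀N (he ▸ (nilradical R).zero_mem)
      have hs₀2 : s₀ * s₀ ≠ 0 :=
        fun he => hs₀N (mem_nilradical.mpr ⟨2, by rw [pow_two]; exact he⟩)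
      have hs₀nu : ¬IsUnit s₀ := fun hu => hPp.ne_top (Ideal.eq_top_of_isUnit_mem _ hs₀P hu)
      obtain ⟨r₁, J1, hr₁, hJ1, hspan1⟩ :=
        hH s₀ (fun hT' => hs₀nu (Ideal.span_singleton_eq_top.mp hT'))
      have hsub1 : (∏ i, J1 i) ≤ P := by
        rw [← hspan1]
        exact (Ideal.span_le).mpr (by simpa using hs₀P)
      obtain ⟨i₃, _, hi₃⟩ := (hPp.prod_le).mp hsub1
      have hJi₃ : J1 i₃ = P := hfacP _ (hJ1 i₃) hi₃
      have hIK : J1 i₃ * (∏ j ∈ Finset.univ.erase i₃, J1 j) = Ideal.span {s₀} := by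
        rw [Finset.mul_prod_erase Finset.univ J1 (Finset.mem_univ i₃)]
        exact hspan1.symm
      obtain ⟨y, hyP', ⟨b, hs₀b⟩, hrep⟩ := starFactor hs₀0 hIK
      rw [hJi₃] at hyP' hrep
      have hygoodne : ∀ Q ∈ minimalPrimes R, Q ≠ P → y ∉ Q := by
        intro Q hQ hQP hyQ
        exact hs₀Q Q hQ hQP (hs₀b ▸ Ideal.mul_mem_right b Q hyQ)
      have hyN : y ∉ nilradical R := by
        intro hyN'
        exact hs₀N (hs₀b ▸ (nilradical R).mul_mem_right b hyN')
      have hPle : ∀ p ∈ P, p ∈ Ideal.span {y} + nilradical R := by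
        intro p hp
        obtain ⟨g, η, hpe, hηs⟩ := hrep p hp
        have hηP : η ∈ P := by
          have he : η = p - y * g := by rw [hpe]; ring
          rw [he]
          exact Ideal.sub_mem _ hp (P.mul_mem_right g hyP')
        have hηN : η ∈ nilradical R := by
          rw [nilradical_eq_sInf, Ideal.mem_sInf]
          intro Jp hJp
          haveI : Jp.IsPrime := hJp
          obtain ⟨Q, hQ, hQJ⟩ := Ideal.exists_minimalPrimes_le (bot_le : (⊥ : Ideal R) ≤ Jp)
          apply hQJ
          by_cases hQP2 : Q = P
          · rw [hQP2]; exact hηP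
          · have hsQ := hs₀Q Q hQ hQP2
            have hmem : η * s₀ ∈ Q := by rw [hηs]; exact Q.zero_mem
            exact (hQ.1.1.mem_or_mem hmem).resolve_right hsQ
        rw [hpe]
        exact Ideal.add_mem _
          (mem_add_left _ _ (Ideal.mul_mem_right g _ (Ideal.mem_span_singleton_self y)))
          (mem_add_right _ _ hηN)
      have hωy : ω * y ∈ nilradical R := by
        obtain ⟨a', ha'⟩ : ∃ a', T.card = a' + 1 :=
          ⟨T.card - 1, by have := Finset.card_pos.mpr hTne; omega⟩
        apply mem_nilradical.mpr
        refine ⟨T.card, ?_⟩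
        have h1 : y ^ T.card * ω ∈ P ^ T.card * W :=
          Ideal.mul_mem_mul (Ideal.pow_mem_pow hyP' _) hωW
        have h2 : y ^ T.card * ω = 0 := by
          have hb : P ^ T.card * W = ⊥ := hsplit.symm
          exact (Submodule.mem_bot R).mp (hb ▸ h1)
        calc (ω * y) ^ T.card = (y ^ T.card * ω) * ω ^ a' := by rw [ha']; ring
        _ = 0 := by rw [h2, zero_mul]
      set ζ := y + ω with hζ
      have hζgood : ∀ Q ∈ minimalPrimes R, ζ ∉ Q := by
        intro Q hQ hζQ
        by_cases hQP2 : Q = P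
        · subst hQP2
          have hωQ : ω ∈ Q := by
            have he : ω = ζ - y := by rw [hζ]; ring
            rw [he]
            exact Ideal.sub_mem _ hζQ hyP'
          exact hωP hωQ
        · have hyQ := hygoodne Q hQ hQP2
          haveI := hQ.1.1
          have hωQ : ω ∈ Q := by
            have hm2 : ω * y ∈ Q := (nilradical_le_prime Q) hωy
            exact (hQ.1.1.mem_or_mem hm2).resolve_right hyQ
          apply hyQ
          have he : y = ζ - ω := by rw [hζ]; ring
          rw [he]
          exact Ideal.sub_mem _ hζQ hωQ
      have hζnu : ¬IsUnit ζ := by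
        have hζm : ζ ∈ maximalIdeal R :=
          Ideal.add_mem _ ((le_maximalIdeal hPp.ne_top) hyP') (hWm hωW)
        exact (mem_maximalIdeal _).mp hζm
      obtain ⟨r₂, w, u₂, hr₂, hζw, hζprod, hper⟩ :=
        masterFac hn hπ₀ hp1 h01 hp1m hydnu hydgood hydpr hydle hH ζ hζnu hζgood
      set i0 : Fin r₂ := ⟨0, hr₂⟩ with hi0
      set q := Ideal.span {w i0} + nilradical R with hq
      have hqp : q.IsPrime := (hper i0).2.2
      have hζq : ζ ∈ q := by
        have hle : Ideal.span {ζ} ≤ q := by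
          rw [hζprod]
          exact prod_le_factor (Finset.mem_univ i0)
        exact hle (Ideal.mem_span_singleton_self ζ)
      have hy2q : y * y ∈ q := by
        have h1 : ζ * y ∈ q := q.mul_mem_right y hζq
        haveI := hqp
        have h2 : ω * y ∈ q := (nilradical_le_prime q) hωy
        have he : y * y = ζ * y - ω * y := by rw [hζ]; ring
        rw [he]
        exact Ideal.sub_mem _ h1 h2
      have hyq : y ∈ q := (hqp.mem_or_mem hy2q).elim id id
      obtain ⟨g1, hg1, η, hη, hgsum⟩ := mem_add_extract hyq
      obtain ⟨g, hg⟩ := Ideal.mem_span_singleton'.mp hg1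
      have hwgP : w i0 * g ∈ P := by
        have he : w i0 * g = y - η := by rw [← hgsum, ← hg]; ring
        rw [he]
        exact Ideal.sub_mem _ hyP' ((nilradical_le_prime P) hη)
      have hw0P : w i0 ∉ P := (hper i0).2.1 P hPmem
      have hgP : g ∈ P := (hPp.mem_or_mem hwgP).resolve_left hw0P
      obtain ⟨g1', hg1', η', hη', hgsum'⟩ := mem_add_extract (hPle g hgP)
      obtain ⟨g', hg'⟩ := Ideal.mem_span_singleton'.mp hg1'
      have hkey : y * (1 - w i0 * g') ∈ nilradical R := by
        have e1 : y = w i0 * g + η := by rw [← hgsum, ← hg]; ring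
        have e2 : g = g' * y + η' := by rw [← hgsum', ← hg']
        have e : y * (1 - w i0 * g') = w i0 * η' + η := by
          calc y * (1 - w i0 * g') = y - w i0 * (g' * y) := by ring
          _ = (w i0 * g + η) - w i0 * (g - η') := by
              rw [← e1]
              congr 1
              rw [e2]
              ring
          _ = w i0 * η' + η := by ring
        rw [e]
        exact Ideal.add_mem _ ((nilradical R).mul_mem_left _ hη') hη
      have hwm : w i0 ∈ maximalIdeal R := nonunit_mem (hper i0).1
      have hu := unit_one_sub (Ideal.mul_mem_right g' _ hwm)
      apply hyN
      have he : y = (y * (1 - w i0 * g')) * ↑hu.unit⁻¹ := by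
        rw [mul_assoc, hu.mul_val_inv, mul_one]
      rw [he]
      exact (nilradical R).mul_mem_right _ hkey

end Context3

end Stmt8Aux

namespace Stmt8Aux

open IsLocalRing

section Context4

variable {R : Type*} [CommRing R] [IsLocalRing R]
variable {n : ℕ} (hn : 0 < n)
  {π₀ p1 : Ideal R} (hπ₀ : π₀.IsPrime) (hp1 : p1.IsPrime) (h01 : π₀ < p1)
  (hp1m : p1 ≠ maximalIdeal R)
  (hH : ∀ x : R, Ideal.span {x} ≠ ⊤ → HasNOAFactorization n (Ideal.span {x}))

include hn hπ₀ hp1 h01 hp1m hH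

/-- Stage 2: the nilradical is trivial. -/
lemma Nbot : nilradical R = ⊥ := by
  classical
  have hNp : (nilradical R).IsPrime := Nprime hn hπ₀ hp1 h01 hp1m hH
  obtain ⟨yd, hydnu, hydgood, hydpr, hydle⟩ := ydPack hn hπ₀ hp1 h01 hp1m hH
  -- no minimal prime contains yd, used repeatedly
  haveI := hπ₀
  obtain ⟨Qm, hQm, _⟩ := Ideal.exists_minimalPrimes_le (bot_le : (⊥ : Ideal R) ≤ π₀)
  -- factor yd
  obtain ⟨r₃, t, u₃, hr₃, hydt, hydprod, hper₃⟩ :=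
    masterFac hn hπ₀ hp1 h01 hp1m hydnu hydgood hydpr hydle hH yd hydnu hydgood
  set q := Ideal.span {yd} + nilradical R with hq
  have hydq : yd ∈ q := mem_add_left _ _ (Ideal.mem_span_singleton_self yd)
  have htq : (∏ i, t i) ∈ q := by
    have he : (∏ i, t i) = ↑u₃⁻¹ * yd := by
      rw [hydt, ← mul_assoc, Units.inv_mul, one_mul]
    rw [he]
    exact q.mul_mem_left _ hydq
  obtain ⟨j, _, hjq⟩ := prime_prod_mem hydpr htq
  -- r₃ = 1
  have hr₃1 : r₃ = 1 := by
    by_contra hne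
    have h2r : 2 ≤ r₃ := by omega
    set wj := ∏ i ∈ Finset.univ.erase j, t i with hwj
    have hwjm : wj ∈ maximalIdeal R := by
      obtain ⟨j', hj'⟩ : ∃ j', j' ∈ Finset.univ.erase j := by
        apply Finset.card_pos.mp
        rw [Finset.card_erase_of_mem (Finset.mem_univ j), Finset.card_univ, Fintype.card_fin]
        omega
      rw [hwj, ← Finset.mul_prod_erase _ _ hj']
      exact Ideal.mul_mem_right _ _ (nonunit_mem ((hper₃ j').1))
    obtain ⟨g1, hg1, η, hη, hgsum⟩ := mem_add_extract hjq
    obtain ⟨g, hg⟩ := Ideal.mem_span_singleton'.mp hg1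
    have hyeq : yd = ↑u₃ * (t j * wj) := by
      rw [hydt, hwj, ← Finset.mul_prod_erase _ _ (Finset.mem_univ j)]
    have hkey : yd * (1 - ↑u₃ * g * wj) ∈ nilradical R := by
      have e2 : t j = g * yd + η := by rw [← hgsum, ← hg]
      have e : yd * (1 - ↑u₃ * g * wj) = ↑u₃ * η * wj := by
        calc yd * (1 - ↑u₃ * g * wj) = yd - (yd * g) * (↑u₃ * wj) := by ring
        _ = ↑u₃ * ((g * yd + η) * wj) - (yd * g) * (↑u₃ * wj) := by rw [← e2, ← hyeq]
        _ = ↑u₃ * η * wj := by ring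
      rw [e]
      exact (nilradical R).mul_mem_right _ ((nilradical R).mul_mem_left _ hη)
    have hum : ↑u₃ * g * wj ∈ maximalIdeal R := Ideal.mul_mem_left _ _ hwjm
    have hu := unit_one_sub hum
    have hydN : yd ∈ nilradical R := by
      have he : yd = (yd * (1 - ↑u₃ * g * wj)) * ↑hu.unit⁻¹ := by
        rw [mul_assoc, hu.mul_val_inv, mul_one]
      rw [he]
      exact (nilradical R).mul_mem_right _ hkey
    haveI := hQm.1.1
    exact hydgood Qm hQm ((nilradical_le_prime Qm) hydN)
  -- N ≤ span {yd}
  subst hr₃1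
  have hprod1 : Ideal.span {yd} = Ideal.span {t 0} + nilradical R := by
    rw [hydprod, Fin.prod_univ_one]
  have hNle : nilradical R ≤ Ideal.span {yd} := by
    rw [hprod1]
    exact fun x hx => mem_add_right _ _ hx
  -- N = yd * N elementwise
  have hNscale : ∀ η ∈ nilradical R, ∃ lam ∈ nilradical R, η = yd * lam := by
    intro η hη
    obtain ⟨lam, hlam⟩ := Ideal.mem_span_singleton'.mp (hNle hη)
    refine ⟨lam, ?_, by rw [← hlam]; ring⟩
    obtain ⟨k, hk⟩ := mem_nilradical.mp hη
    have hzk : lam ^ k * yd ^ k = 0 := by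
      rw [← mul_pow, hlam, hk]
    exact mem_nilradical_of_pow (goodAnn hydgood k (lam ^ k) hzk)
  -- final blow
  rw [eq_bot_iff]
  intro η hη
  rw [Submodule.mem_bot]
  by_contra hη0
  have hηnu : ¬IsUnit η := fun hu => nilrad_ne_top (Ideal.eq_top_of_isUnit_mem _ hη hu)
  obtain ⟨r₄, J2, hr₄, hJ2, hspan2⟩ :=
    hH η (fun hT => hηnu (Ideal.span_singleton_eq_top.mp hT))
  have hsub : (∏ i, J2 i) ≤ nilradical R := by
    rw [← hspan2]
    exact (Ideal.span_le).mpr (by simpa using hη)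
  obtain ⟨i₄, _, hi₄⟩ := (hNp.prod_le).mp hsub
  have hJi₄ : J2 i₄ = nilradical R := by
    by_cases hp : (J2 i₄).IsPrime
    · haveI := hp
      exact le_antisymm hi₄ (nilradical_le_prime _)
    · exfalso
      -- pick c₀ ∈ m \ π₀ , then c₀ ∉ N
      have hmπ₀ : ¬ maximalIdeal R ≤ π₀ := by
        intro hle
        have hcon : p1 ≤ π₀ := le_trans (le_maximalIdeal hp1.ne_top) hle
        exact absurd (lt_of_lt_of_le h01 hcon) (lt_irrefl π₀)
      obtain ⟨c₀, hc₀m, hc₀π₀⟩ := SetLike.not_le_iff_exists.mp hmπ₀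
      have hc₀N : c₀ ∉ nilradical R := fun hc => hc₀π₀ ((nilradical_le_prime π₀) hc)
      have hmem := dichotomy hn (hJ2 i₄) hp (fun _ => c₀)
        (fun _ => (mem_maximalIdeal _).mp hc₀m)
      rw [Finset.prod_const, Finset.card_univ, Fintype.card_fin] at hmem
      exact hc₀N (mem_nilradical_of_pow (hi₄ hmem))
  have hIK : (nilradical R) * (∏ j2 ∈ Finset.univ.erase i₄, J2 j2) = Ideal.span {η} := by
    rw [← hJi₄, Finset.mul_prod_erase Finset.univ J2 (Finset.mem_univ i₄)]
    exact hspan2.symm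
  have hmem : η ∈ (nilradical R) * (∏ j2 ∈ Finset.univ.erase i₄, J2 j2) := by
    rw [hIK]
    exact Ideal.mem_span_singleton_self η
  have hP2 : ∀ z ∈ (nilradical R) * (∏ j2 ∈ Finset.univ.erase i₄, J2 j2),
      ∃ c, z = yd * (c * η) := by
    intro z hz
    refine Submodule.mul_induction_on hz ?_ ?_
    · intro ν hν κ hκ
      obtain ⟨lam, hlamN, hlam⟩ := hNscale ν hν
      have hin : lam * κ ∈ Ideal.span {η} := by
        rw [← hIK]
        exact Ideal.mul_mem_mul hlamN hκ
      obtain ⟨c, hc⟩ := Ideal.mem_span_singleton'.mp hin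
      exact ⟨c, by rw [hlam, mul_assoc, ← hc]⟩
    · rintro a b ⟨c1, h1⟩ ⟨c2, h2⟩
      exact ⟨c1 + c2, by rw [h1, h2]; ring⟩
  obtain ⟨c, hc⟩ := hP2 η hmem
  have hukey : η * (1 - yd * c) = 0 := by
    calc η * (1 - yd * c) = η - (yd * (c * η)) := by ring
    _ = η - η := by rw [← hc]
    _ = 0 := by ring
  have hydcm : yd * c ∈ maximalIdeal R := Ideal.mul_mem_right c _ (nonunit_mem hydnu)
  have hu := unit_one_sub hydcm
  apply hη0
  calc η = (η * (1 - yd * c)) * ↑hu.unit⁻¹ := by rw [mul_assoc, hu.mul_val_inv, mul_one]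
  _ = 0 := by rw [hukey, zero_mul]

end Context4

end Stmt8Aux

theorem stmt8 {R : Type*} [CommRing R] [IsLocalRing R] (n : ℕ) (hn : 0 < n)
    (h : ∀ x : R, Ideal.span {x} ≠ ⊤ → HasNOAFactorization n (Ideal.span {x}))
    (hdim : 2 ≤ ringKrullDim R) :
    ∃ _ : IsDomain R, UniqueFactorizationMonoid R := by
  classical
  open IsLocalRing Stmt8Aux in
  -- extract a chain of primes of length 2
  obtain ⟨l, hl⟩ : ∃ l : LTSeries (PrimeSpectrum R), 2 ≤ l.length := by
    by_contra hc
    push_neg at hc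
    have h1 : ringKrullDim R ≤ 1 := by
      rw [ringKrullDim, Order.krullDim]
      apply iSup_le
      intro p
      have := hc p
      exact_mod_cast (by omega : p.length ≤ 1)
    have h2 := hdim.trans h1
    norm_num at h2
  set P0 : PrimeSpectrum R := l.toFun ⟨0, by omega⟩ with hP0
  set P1 : PrimeSpectrum R := l.toFun ⟨1, by omega⟩ with hP1
  set P2 : PrimeSpectrum R := l.toFun ⟨2, by omega⟩ with hP2
  have h01s : P0 < P1 := l.strictMono (by rw [Fin.lt_def]; norm_num)
  have h12s : P1 < P2 := l.strictMono (by rw [Fin.lt_def]; norm_num)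
  set π₀ := P0.asIdeal with hπ₀d
  set p1 := P1.asIdeal with hp1d
  have hπ₀ : π₀.IsPrime := P0.isPrime
  have hp1 : p1.IsPrime := P1.isPrime
  have h01 : π₀ < p1 := h01s
  have h12 : p1 < P2.asIdeal := h12s
  have hp1m : p1 ≠ maximalIdeal R := by
    intro he
    have hP2m : P2.asIdeal ≤ maximalIdeal R := le_maximalIdeal P2.isPrime.ne_top
    have : p1 < p1 := lt_of_lt_of_le h12 (he ▸ hP2m)
    exact lt_irrefl _ this
  -- stage 1+2: domain
  have hNbot : nilradical R = ⊥ := Nbot hn hπ₀ hp1 h01 hp1m h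
  have hNp : (nilradical R).IsPrime := Nprime hn hπ₀ hp1 h01 hp1m h
  have hbotp : (⊥ : Ideal R).IsPrime := hNbot ▸ hNp
  haveI : NoZeroDivisors R := by
    refine ⟨fun {a b} hab => ?_⟩
    have hmem : a * b ∈ (⊥ : Ideal R) := (Submodule.mem_bot R).mpr hab
    rcases hbotp.mem_or_mem hmem with h' | h'
    · exact Or.inl ((Submodule.mem_bot R).mp h')
    · exact Or.inr ((Submodule.mem_bot R).mp h')
  haveI hdom : IsDomain R := NoZeroDivisors.to_isDomain R
  -- ⊥ is the unique minimal prime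
  have hbotmem : (⊥ : Ideal R) ∈ minimalPrimes R := ⟨⟨hbotp, le_refl _⟩, fun _ _ _ => bot_le⟩
  have hminbot : ∀ P ∈ minimalPrimes R, P = ⊥ := by
    intro P hP
    exact le_antisymm (hP.2 ⟨hbotp, bot_le⟩ bot_le) bot_le
  -- get yd pack for masterFac
  obtain ⟨yd, hydnu, hydgood, hydpr, hydle⟩ := ydPack hn hπ₀ hp1 h01 hp1m h
  refine ⟨hdom, ?_⟩
  apply UniqueFactorizationMonoid.of_exists_prime_factors
  intro a ha0
  by_cases hau : IsUnit a
  · refine ⟨0, by simp, ?_⟩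
    rw [Multiset.prod_zero]
    exact (associated_one_iff_isUnit.mpr hau).symm
  · have hagood : ∀ P ∈ minimalPrimes R, a ∉ P := by
      intro P hP haP
      rw [hminbot P hP] at haP
      exact ha0 ((Submodule.mem_bot R).mp haP)
    obtain ⟨r, y, u, hr, hxu, hprodeq, hper⟩ :=
      masterFac hn hπ₀ hp1 h01 hp1m hydnu hydgood hydpr hydle h a hau hagood
    refine ⟨(↑(List.ofFn y) : Multiset R), ?_, ?_⟩
    · intro b hb
      rw [Multiset.mem_coe, List.mem_ofFn] at hb
      obtain ⟨i, rfl⟩ := hb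
      have hyne : y i ≠ 0 := by
        intro he
        exact (hper i).2.1 ⊥ hbotmem (he ▸ (⊥ : Ideal R).zero_mem)
      have hprime : (Ideal.span {y i}).IsPrime := by
        have hpi := (hper i).2.2
        rwa [hNbot, Submodule.add_eq_sup, sup_bot_eq] at hpi
      exact (Ideal.span_singleton_prime hyne).mp hprime
    · have hple : (↑(List.ofFn y) : Multiset R).prod = ∏ i, y i := by
        rw [Multiset.prod_coe, List.prod_ofFn]
      rw [hple]
      exact ⟨u, by rw [mul_comm]; exact hxu.symm⟩
end

section
/- If R is an n-OAF ring and I is a proper ideal of R, then the quotient ring R/I is an n-OAF ring. -/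
theorem stmt10 {R : Type*} [CommRing R] [Nontrivial R] (n : ℕ) (hn : 0 < n)
    (hR : IsNOAFRing R n) (I : Ideal R) (hI : I ≠ ⊤) :
    IsNOAFRing (R ⧸ I) n := by
  intro K hK
  set f := Ideal.Quotient.mk I with hf_def
  have hf : Function.Surjective f := Ideal.Quotient.mk_surjective
  have hK' : Ideal.comap f K ≠ ⊤ := by
    intro h
    apply hK
    have h2 := Ideal.map_comap_of_surjective f hf K
    rw [h] at h2
    rw [← h2]
    exact Ideal.map_top f
  obtain ⟨m, J, hm, hJ, hprod⟩ := hR _ hK'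
  have hIle : ∀ i, I ≤ J i := by
    intro i
    have h1 : (∏ j, J j) ≤ J i :=
      le_trans Ideal.prod_le_inf (Finset.inf_le (Finset.mem_univ i))
    have h2 : I ≤ Ideal.comap f K := by
      intro x hx
      simp [hf_def, Ideal.Quotient.eq_zero_iff_mem.mpr hx]
    exact le_trans h2 (hprod ▸ h1)
  have hcm : ∀ i, Ideal.comap f (Ideal.map f (J i)) = J i := by
    intro i
    rw [Ideal.comap_map_of_surjective f hf]
    refine sup_eq_left.mpr ?_
    refine le_trans ?_ (hIle i)
    intro x hx
    simpa [hf_def, Ideal.Quotient.eq_zero_iff_mem] using hx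
  refine ⟨m, fun i => Ideal.map f (J i), hm, fun i => ⟨?_, ?_⟩, ?_⟩
  · intro h
    apply (hJ i).1
    have h' : Ideal.map f (J i) = ⊤ := h
    rw [← hcm i, h', Ideal.comap_top]
  · intro b hb hmem
    choose a ha using fun j => hf (b j)
    have ha' : ∀ j, ¬IsUnit (a j) := by
      intro j h
      exact hb j (ha j ▸ h.map f)
    have hin : (∏ j, a j) ∈ J i := by
      rw [← hcm i]
      show f (∏ j, a j) ∈ Ideal.map f (J i)
      rw [map_prod]
      simpa [ha] using hmem
    rcases (hJ i).2 a ha' hin with h | h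
    · left
      have := Ideal.mem_map_of_mem f h
      rw [map_prod] at this
      simpa [ha] using this
    · right
      have := Ideal.mem_map_of_mem f h
      rwa [ha] at this
  · rw [← Ideal.map_comap_of_surjective f hf K, hprod]
    exact map_prod (Ideal.mapHom f) _ _
end

section
/- If R is an n-OAF ring and S is a multiplicatively closed subset of R, then the localization S⁻¹R is an n-OAF ring. -/
open Localization in
lemma aux_mk_prod {R : Type*} [CommRing R] {S : Submonoid R} {ι : Type*} (t : Finset ι)
    (f : ι → R) (g : ι → S) :
    ∏ i ∈ t, (Localization.mk (f i) (g i) : Localization S) =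
      Localization.mk (∏ i ∈ t, f i) (∏ i ∈ t, g i) := by
  classical
  induction t using Finset.induction_on with
  | empty => simp [Localization.mk_one]
  | insert _ _ h ih => simp [Finset.prod_insert h, ih, Localization.mk_mul]

lemma aux_mk_nonunit {R : Type*} [CommRing R] {S : Submonoid R} {r : R} {s : S}
    (h : ¬IsUnit (Localization.mk r s : Localization S)) : ¬IsUnit r := by
  intro hr
  apply h
  have h1 : (Localization.mk r s : Localization S) = algebraMap R (Localization S) r *
      Localization.mk 1 s := by
    rw [← Localization.mk_one_eq_algebraMap, Localization.mk_mul, mul_one, one_mul]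
  rw [h1]
  exact (hr.map (algebraMap R (Localization S))).mul
    (IsUnit.of_mul_eq_one (Localization.mk (s : R) 1) (by
      rw [Localization.mk_mul, one_mul, mul_one, Localization.mk_self]))

lemma aux_mk_mem_map {R : Type*} [CommRing R] {S : Submonoid R} {J : Ideal R} {r : R} (s : S)
    (hr : r ∈ J) : (Localization.mk r s : Localization S) ∈
      Ideal.map (algebraMap R (Localization S)) J := by
  rw [IsLocalization.mem_map_algebraMap_iff S]
  refine ⟨⟨⟨r, hr⟩, s⟩, ?_⟩
  simp only [← Localization.mk_one_eq_algebraMap, Localization.mk_mul]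
  rw [Localization.mk_eq_mk_iff, Localization.r_iff_exists]
  exact ⟨1, by push_cast; ring⟩

lemma aux_map_finprod {R : Type*} [CommRing R] {R' : Type*} [CommRing R'] {ι : Type*}
    (t : Finset ι) (f : R →+* R') (J : ι → Ideal R) :
    Ideal.map f (∏ i ∈ t, J i) = ∏ i ∈ t, Ideal.map f (J i) := by
  classical
  induction t using Finset.induction_on with
  | empty => simp [Ideal.one_eq_top, Ideal.map_top]
  | insert _ _ h ih => rw [Finset.prod_insert h, Finset.prod_insert h, Ideal.map_mul, ih]

lemma aux_map_isNOA {R : Type*} [CommRing R] (n : ℕ) (S : Submonoid R) (J : Ideal R)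
    (hJ : IsNOAIdeal n J)
    (hmap : Ideal.map (algebraMap R (Localization S)) J ≠ ⊤) :
    IsNOAIdeal n (Ideal.map (algebraMap R (Localization S)) J) := by
  classical
  refine ⟨hmap, fun a ha hprod => ?_⟩
  -- pick representatives
  have hrep : ∀ i, ∃ p : R × S, a i = Localization.mk p.1 p.2 := fun i =>
    Localization.induction_on (a i) fun p => ⟨p, rfl⟩
  choose p hp using hrep
  set r : Fin (n + 1) → R := fun i => (p i).1 with hr
  set s : Fin (n + 1) → S := fun i => (p i).2 with hs
  have hmk : ∀ i, a i = Localization.mk (r i) (s i) := hp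
  have hprod' : (Localization.mk (∏ i, r i) (∏ i, s i) : Localization S) ∈
      Ideal.map (algebraMap R (Localization S)) J := by
    rw [← aux_mk_prod]
    simpa only [← hmk] using hprod
  rw [IsLocalization.mem_map_algebraMap_iff S] at hprod'
  obtain ⟨⟨⟨j, hj⟩, u⟩, hu⟩ := hprod'
  simp only [← Localization.mk_one_eq_algebraMap, Localization.mk_mul] at hu
  rw [Localization.mk_eq_mk_iff, Localization.r_iff_exists] at hu
  obtain ⟨c, hc⟩ := hu
  simp only [OneMemClass.coe_one, one_mul] at hc
  -- (c * u) * ∏ r = (c * ∏ s) * j ∈ J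
  have hkey : (↑c * ↑u : R) * ∏ i, r i ∈ J := by
    have h2 : (↑c * ↑u : R) * ∏ i, r i = ↑c * ((∏ i, r i) * ↑u) := by ring
    rw [h2, hc]
    exact J.mul_mem_left _ (J.mul_mem_left _ hj)
  set w : R := (↑c * ↑u : R) with hw
  -- apply the n-OA property in R
  set b : Fin (n + 1) → R := fun i => if i = Fin.last n then w * r i else r i with hb
  have hbnon : ∀ i, ¬IsUnit (b i) := by
    intro i
    have hri : ¬IsUnit (r i) := aux_mk_nonunit (hmk i ▸ ha i)
    by_cases hi : i = Fin.last n
    · subst hi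
      simp only [hb, if_pos rfl]
      intro hwu
      exact hri (isUnit_of_mul_isUnit_right hwu)
    · simpa [hb, hi] using hri
  have h1 : ∀ i : Fin n, b i.castSucc = r i.castSucc := fun i => by
    simp [hb, (Fin.castSucc_lt_last i).ne]
  have h2 : b (Fin.last n) = w * r (Fin.last n) := by simp [hb]
  have hbprod : (∏ i, b i) ∈ J := by
    have : (∏ i, b i) = w * ∏ i, r i := by
      rw [Fin.prod_univ_castSucc (f := b), Fin.prod_univ_castSucc (f := r)]
      simp only [h1, h2]
      ring
    rw [this]; exact hkey
  rcases hJ.2 b hbnon hbprod with h | h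
  · left
    simp only [h1] at h
    have : (∏ i : Fin n, a i.castSucc) =
        Localization.mk (∏ i : Fin n, r i.castSucc) (∏ i : Fin n, s i.castSucc) := by
      simp only [hmk]; exact aux_mk_prod Finset.univ _ _
    rw [this]
    exact aux_mk_mem_map _ h
  · right
    rw [h2] at h
    rw [hmk (Fin.last n)]
    have : (Localization.mk (r (Fin.last n)) (s (Fin.last n)) : Localization S) =
        Localization.mk (w * r (Fin.last n)) (⟨w, by exact S.mul_mem c.2 u.2⟩ * s (Fin.last n)) := by
      rw [Localization.mk_eq_mk_iff, Localization.r_iff_exists]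
      exact ⟨1, by push_cast; ring⟩
    rw [this]
    exact aux_mk_mem_map _ h

theorem stmt11 {R : Type*} [CommRing R] [Nontrivial R] (n : ℕ) (hn : 0 < n)
    (S : Submonoid R) (hS : (0 : R) ∉ S) (hR : IsNOAFRing R n) :
    IsNOAFRing (Localization S) n := by
  classical
  intro I hI
  set f := algebraMap R (Localization S) with hf
  have hcomap : Ideal.comap f I ≠ ⊤ := by
    intro h
    apply hI
    rw [Ideal.eq_top_iff_one]
    have h1 : (1 : R) ∈ Ideal.comap f I := by rw [h]; trivial
    simpa using h1
  obtain ⟨m, J, hm, hJOA, hJprod⟩ := hR (Ideal.comap f I) hcomap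
  have hIeq : I = ∏ i, Ideal.map f (J i) := by
    conv_lhs => rw [← IsLocalization.map_comap S (Localization S) I]
    rw [show Ideal.under R I = Ideal.comap f I from rfl, hJprod, aux_map_finprod]
  set t : Finset (Fin m) := Finset.univ.filter fun i => Ideal.map f (J i) ≠ ⊤ with ht
  have hIt : I = ∏ i ∈ t, Ideal.map f (J i) := by
    rw [hIeq]
    refine (Finset.prod_subset (Finset.subset_univ t) fun i _ hi => ?_).symm
    have : ¬ Ideal.map f (J i) ≠ ⊤ := by
      intro h; exact hi (Finset.mem_filter.mpr ⟨Finset.mem_univ i, h⟩)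
    rw [not_not.mp this, Ideal.one_eq_top]
  have htcard : 0 < t.card := by
    rcases Finset.eq_empty_or_nonempty t with h | h
    · exfalso; apply hI; rw [hIt, h, Finset.prod_empty, Ideal.one_eq_top]
    · exact Finset.card_pos.mpr h
  refine ⟨t.card, fun j => Ideal.map f (J (t.equivFin.symm j)), htcard, ?_, ?_⟩
  · intro j
    have hmem : Ideal.map f (J ↑(t.equivFin.symm j)) ≠ ⊤ :=
      (Finset.mem_filter.mp (t.equivFin.symm j).2).2
    exact aux_map_isNOA n S _ (hJOA _) hmem
  · rw [hIt, ← Finset.prod_coe_sort t (fun i => Ideal.map f (J i))]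
    exact (Equiv.prod_comp t.equivFin.symm fun x => Ideal.map f (J x)).symm
end

section
/- Let A and B be commutative rings and R = A × B. Then R is an n-OAF ring if and only if both A and B are general ZPI-rings. -/
section Aux

/-- Every prime ideal is an `n`-OA ideal. -/
lemma IsNOAIdeal.of_isPrime {R : Type*} [CommRing R] (n : ℕ) {P : Ideal R}
    (hP : P.IsPrime) : IsNOAIdeal n P := by
  refine ⟨hP.ne_top, fun a _ hmem => ?_⟩
  haveI := hP
  rw [Ideal.IsPrime.prod_mem_iff] at hmem
  obtain ⟨i, -, hi⟩ := hmem
  by_cases h : i = Fin.last n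
  · exact Or.inr (h ▸ hi)
  · obtain ⟨j, rfl⟩ := Fin.exists_castSucc_eq.mpr h
    left
    obtain ⟨c, hc⟩ := Finset.dvd_prod_of_mem (fun j : Fin n => a j.castSucc)
      (Finset.mem_univ j)
    rw [hc]
    exact Ideal.mul_mem_right _ _ hi

lemma prod_snoc {M : Type*} [CommMonoid M] {n : ℕ} (b : Fin n → M) (u : M) :
    (∏ i, (Fin.snoc b u : Fin (n + 1) → M) i) = (∏ i, b i) * u := by
  rw [Fin.prod_univ_castSucc]; simp

lemma prod_snoc_cast {M : Type*} [CommMonoid M] {n : ℕ} (b : Fin n → M) (u : M) :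
    (∏ i : Fin n, (Fin.snoc b u : Fin (n + 1) → M) i.castSucc) = ∏ i, b i := by
  simp

lemma prod_cons_const {M : Type*} [CommMonoid M] {m : ℕ} (v w : M) :
    (∏ i, (Fin.cons v (fun _ : Fin m => w) : Fin (m + 1) → M) i) = v * w ^ m := by
  rw [Fin.prod_univ_succ]; simp

/-- In a nontrivial product ring, every `n`-OA ideal is prime. -/
lemma Ideal.isPrime_of_isNOAIdeal {A B : Type*} [CommRing A] [CommRing B]
    [Nontrivial A] [Nontrivial B] {n : ℕ} (hn : 0 < n) {I : Ideal (A × B)}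
    (hI : IsNOAIdeal n I) : I.IsPrime := by
  obtain ⟨m, rfl⟩ : ∃ m, n = m + 1 := ⟨n - 1, (Nat.succ_pred_eq_of_pos hn).symm⟩
  obtain ⟨hne, hoa⟩ := hI
  have nu2 : ∀ a : A, ¬IsUnit ((a, 0) : A × B) := fun a h =>
    not_isUnit_zero (M₀ := B) (by simpa using h.map (RingHom.snd A B))
  have nu1 : ∀ b : B, ¬IsUnit ((0, b) : A × B) := fun b h =>
    not_isUnit_zero (M₀ := A) (by simpa using h.map (RingHom.fst A B))
  -- Step 1: (0,1) ∈ I or (1,0) ∈ I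
  have key : ((0, 1) : A × B) ∈ I ∨ ((1, 0) : A × B) ∈ I := by
    have h1 := hoa (Fin.snoc (fun _ : Fin (m + 1) => ((0 : A), (1 : B))) ((1 : A), (0 : B)))
      ?_ ?_
    · rcases h1 with h | h
      · left
        rw [prod_snoc_cast] at h
        simpa [Finset.prod_const, Prod.pow_mk] using h
      · right
        simpa using h
    · intro i
      refine Fin.lastCases ?_ (fun j => ?_) i
      · simpa using nu2 1
      · simpa using nu1 1
    · rw [prod_snoc, Finset.prod_const, Finset.card_univ, Fintype.card_fin]
      have : (((0 : A), (1 : B)) ^ (m + 1) * ((1 : A), (0 : B)) : A × B) = 0 := by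
        simp [Prod.pow_mk, Prod.ext_iff]
      rw [this]
      exact I.zero_mem
  rw [Ideal.isPrime_iff]
  refine ⟨hne, ?_⟩
  rcases key with h01 | h10
  · -- (0,1) ∈ I : then (0,b) ∈ I for all b, and I behaves like a prime over A
    have hmem0 : ∀ b : B, ((0, b) : A × B) ∈ I := fun b => by
      simpa using I.mul_mem_left ((0 : A), b) h01
    rintro ⟨x1, x2⟩ ⟨y1, y2⟩ hxy
    have hxy' : (((x1 * y1 : A), (0 : B)) : A × B) ∈ I := by
      have := I.sub_mem hxy (hmem0 (x2 * y2))
      simpa using this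
    have h2 := hoa (Fin.snoc (Fin.cons ((x1, 0) : A × B) fun _ : Fin m => ((1 : A), (0 : B)))
      ((y1, 0) : A × B)) ?_ ?_
    · rcases h2 with h | h
      · left
        rw [prod_snoc_cast, prod_cons_const] at h
        have hx : (((x1, 0) : A × B)) ∈ I := by
          simpa [Prod.pow_mk, Prod.ext_iff] using h
        have := I.add_mem hx (hmem0 x2)
        simpa using this
      · right
        simp only [Fin.snoc_last] at h
        have := I.add_mem h (hmem0 y2)
        simpa using this
    · intro i
      refine Fin.lastCases ?_ (fun j => ?_) i
      · simpa using nu2 y1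
      · refine Fin.cases ?_ (fun k => ?_) j <;> simp only [Fin.snoc_castSucc, Fin.cons_zero,
          Fin.cons_succ]
        · exact nu2 x1
        · exact nu2 1
    · rw [prod_snoc, prod_cons_const]
      have : ((((x1, 0) : A × B) * ((1 : A), (0 : B)) ^ m * ((y1, 0) : A × B)) : A × B)
          = ((x1 * y1, 0) : A × B) := by
        simp [Prod.pow_mk, Prod.ext_iff]
      rw [this]
      exact hxy'
  · -- (1,0) ∈ I : symmetric
    have hmem0 : ∀ a : A, ((a, 0) : A × B) ∈ I := fun a => by
      simpa using I.mul_mem_left (a, (0 : B)) h10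
    rintro ⟨x1, x2⟩ ⟨y1, y2⟩ hxy
    have hxy' : (((0 : A), (x2 * y2 : B)) : A × B) ∈ I := by
      have := I.sub_mem hxy (hmem0 (x1 * y1))
      simpa using this
    have h2 := hoa (Fin.snoc (Fin.cons (((0 : A), x2) : A × B) fun _ : Fin m => ((0 : A), (1 : B)))
      (((0 : A), y2) : A × B)) ?_ ?_
    · rcases h2 with h | h
      · left
        rw [prod_snoc_cast, prod_cons_const] at h
        have hx : ((((0 : A), x2) : A × B)) ∈ I := by
          simpa [Prod.pow_mk, Prod.ext_iff] using h
        have := I.add_mem hx (hmem0 x1)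
        simpa using this
      · right
        simp only [Fin.snoc_last] at h
        have := I.add_mem h (hmem0 y1)
        simpa using this
    · intro i
      refine Fin.lastCases ?_ (fun j => ?_) i
      · simpa using nu1 y2
      · refine Fin.cases ?_ (fun k => ?_) j <;> simp only [Fin.snoc_castSucc, Fin.cons_zero,
          Fin.cons_succ]
        · exact nu1 x2
        · exact nu1 1
    · rw [prod_snoc, prod_cons_const]
      have : (((((0 : A), x2) : A × B) * ((0 : A), (1 : B)) ^ m * (((0 : A), y2) : A × B)) : A × B)
          = (((0 : A), x2 * y2) : A × B) := by
        simp [Prod.pow_mk, Prod.ext_iff]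
      rw [this]
      exact hxy'

/-- Removing the top factors from a factorization into prime-or-top ideals. -/
lemma exists_prime_factorization_of_factorization {R : Type*} [CommRing R] :
    ∀ (m : ℕ) (K : Fin m → Ideal R), (∀ i, (K i).IsPrime ∨ K i = ⊤) →
      ∀ I : Ideal R, I ≠ ⊤ → I = ∏ i, K i →
      ∃ (m' : ℕ) (J : Fin m' → Ideal R), 0 < m' ∧ (∀ i, (J i).IsPrime) ∧ I = ∏ i, J i := by
  intro m
  induction m with
  | zero =>
    intro K _ I hI hEq
    exact absurd (by simpa [Ideal.one_eq_top] using hEq) hI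
  | succ m ih =>
    intro K hK I hI hEq
    rw [Fin.prod_univ_castSucc] at hEq
    rcases hK (Fin.last m) with hp | htop
    · by_cases h' : (∏ i : Fin m, K i.castSucc) = ⊤
      · refine ⟨1, fun _ => K (Fin.last m), one_pos, fun _ => hp, ?_⟩
        rw [hEq, h', Ideal.top_mul]
        simp
      · obtain ⟨m', J, hm', hJp, hJ⟩ := ih (fun i => K i.castSucc) (fun i => hK _) _ h' rfl
        refine ⟨m' + 1, Fin.snoc J (K (Fin.last m)), Nat.succ_pos _, ?_, ?_⟩
        · intro i
          refine Fin.lastCases ?_ (fun j => ?_) i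
          · simpa using hp
          · simpa using hJp j
        · rw [Fin.prod_univ_castSucc]
          simp only [Fin.snoc_castSucc, Fin.snoc_last]
          rw [hEq, ← hJ]
    · rw [htop, Ideal.mul_top] at hEq
      exact ih _ (fun i => hK _) I hI hEq

lemma Ideal.prod_mul_prod' {R S : Type*} [CommRing R] [CommRing S]
    (I₁ I₂ : Ideal R) (J₁ J₂ : Ideal S) :
    Ideal.prod I₁ J₁ * Ideal.prod I₂ J₂ = Ideal.prod (I₁ * I₂) (J₁ * J₂) := by
  apply le_antisymm
  · rw [Ideal.mul_le]
    rintro ⟨r1, s1⟩ hr ⟨r2, s2⟩ hs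
    rw [Ideal.mem_prod] at hr hs
    exact ⟨Ideal.mul_mem_mul hr.1 hs.1, Ideal.mul_mem_mul hr.2 hs.2⟩
  · rintro ⟨r, s⟩ hx
    rw [Ideal.mem_prod] at hx
    have claim1 : (((r, 0) : R × S)) ∈ Ideal.prod I₁ J₁ * Ideal.prod I₂ J₂ := by
      refine Submodule.mul_induction_on (C := fun z => ((z, 0) : R × S) ∈ Ideal.prod I₁ J₁ * Ideal.prod I₂ J₂) hx.1 (fun a ha b hb => ?_) (fun x y hx' hy' => ?_)
      · have : (((a * b, 0) : R × S)) = ((a, 0) : R × S) * ((b, 0) : R × S) := by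
          simp
        rw [this]
        exact Ideal.mul_mem_mul (Ideal.mem_prod _ _ |>.mpr ⟨ha, (Ideal.zero_mem _)⟩)
          (Ideal.mem_prod _ _ |>.mpr ⟨hb, (Ideal.zero_mem _)⟩)
      · have : (((x + y, 0) : R × S)) = ((x, 0) : R × S) + ((y, 0) : R × S) := by simp
        rw [this]
        exact Submodule.add_mem _ hx' hy'
    have claim2 : (((0, s) : R × S)) ∈ Ideal.prod I₁ J₁ * Ideal.prod I₂ J₂ := by
      refine Submodule.mul_induction_on (C := fun z => ((0, z) : R × S) ∈ Ideal.prod I₁ J₁ * Ideal.prod I₂ J₂) hx.2 (fun a ha b hb => ?_) (fun x y hx' hy' => ?_)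
      · have : (((0, a * b) : R × S)) = ((0, a) : R × S) * ((0, b) : R × S) := by
          simp
        rw [this]
        exact Ideal.mul_mem_mul (Ideal.mem_prod _ _ |>.mpr ⟨Ideal.zero_mem _, ha⟩)
          (Ideal.mem_prod _ _ |>.mpr ⟨Ideal.zero_mem _, hb⟩)
      · have : (((0, x + y) : R × S)) = ((0, x) : R × S) + ((0, y) : R × S) := by simp
        rw [this]
        exact Submodule.add_mem _ hx' hy'
    have := Submodule.add_mem _ claim1 claim2
    simpa using this

lemma Ideal.finprod_prod {R S : Type*} [CommRing R] [CommRing S] :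
    ∀ (m : ℕ) (P : Fin m → Ideal R) (Q : Fin m → Ideal S),
      (∏ i, Ideal.prod (P i) (Q i)) = Ideal.prod (∏ i, P i) (∏ i, Q i) := by
  intro m
  induction m with
  | zero => intro P Q; simp [Ideal.one_eq_top]
  | succ m ih =>
    intro P Q
    rw [Fin.prod_univ_succ, Fin.prod_univ_succ (f := P), Fin.prod_univ_succ (f := Q), ih,
      Ideal.prod_mul_prod']

lemma Ideal.map_finprod_fin {R S : Type*} [CommRing R] [CommRing S] (f : R →+* S) :
    ∀ (m : ℕ) (J : Fin m → Ideal R),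
      Ideal.map f (∏ i, J i) = ∏ i, Ideal.map f (J i) := by
  intro m
  induction m with
  | zero => intro J; simp [Ideal.one_eq_top, Ideal.map_top]
  | succ m ih =>
    intro J
    rw [Fin.prod_univ_succ, Ideal.map_mul, ih, Fin.prod_univ_succ]

end Aux

theorem stmt12 {A B : Type*} [CommRing A] [CommRing B] [Nontrivial A] [Nontrivial B]
    (n : ℕ) (hn : 0 < n) :
    IsNOAFRing (A × B) n ↔ (IsGeneralZPIRing A ∧ IsGeneralZPIRing B) := by
  constructor
  · intro h
    constructor
    · -- A is a general ZPI-ring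
      intro I1 hI1
      have hproper : Ideal.prod I1 (⊤ : Ideal B) ≠ ⊤ := by
        intro h'
        apply hI1
        rw [Ideal.eq_top_iff_one]
        have : (((1 : A), (1 : B)) : A × B) ∈ Ideal.prod I1 (⊤ : Ideal B) := by
          rw [h']; trivial
        exact this.1
      obtain ⟨m, J, hm, hJ, hEq⟩ := h _ hproper
      have hJp : ∀ i, (J i).IsPrime := fun i => Ideal.isPrime_of_isNOAIdeal hn (hJ i)
      have hfac : I1 = ∏ i, Ideal.map (RingHom.fst A B) (J i) := by
        conv_lhs => rw [← Ideal.map_fst_prod I1 (⊤ : Ideal B)]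
        rw [hEq, Ideal.map_finprod_fin]
      refine exists_prime_factorization_of_factorization m _ ?_ I1 hI1 hfac
      intro i
      rcases (Ideal.ideal_prod_prime (J i)).1 (hJp i) with ⟨p, hp, hpe⟩ | ⟨p, hp, hpe⟩
      · left; rw [hpe, Ideal.map_fst_prod]; exact hp
      · right; rw [hpe, Ideal.map_fst_prod]
    · -- B is a general ZPI-ring
      intro I2 hI2
      have hproper : Ideal.prod (⊤ : Ideal A) I2 ≠ ⊤ := by
        intro h'
        apply hI2
        rw [Ideal.eq_top_iff_one]
        have : (((1 : A), (1 : B)) : A × B) ∈ Ideal.prod (⊤ : Ideal A) I2 := by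
          rw [h']; trivial
        exact this.2
      obtain ⟨m, J, hm, hJ, hEq⟩ := h _ hproper
      have hJp : ∀ i, (J i).IsPrime := fun i => Ideal.isPrime_of_isNOAIdeal hn (hJ i)
      have hfac : I2 = ∏ i, Ideal.map (RingHom.snd A B) (J i) := by
        conv_lhs => rw [← Ideal.map_snd_prod (⊤ : Ideal A) I2]
        rw [hEq, Ideal.map_finprod_fin]
      refine exists_prime_factorization_of_factorization m _ ?_ I2 hI2 hfac
      intro i
      rcases (Ideal.ideal_prod_prime (J i)).1 (hJp i) with ⟨p, hp, hpe⟩ | ⟨p, hp, hpe⟩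
      · right; rw [hpe, Ideal.map_snd_prod]
      · left; rw [hpe, Ideal.map_snd_prod]; exact hp
  · rintro ⟨hA, hB⟩ I hI
    have hIe : I = Ideal.prod (Ideal.map (RingHom.fst A B) I) (Ideal.map (RingHom.snd A B) I) :=
      Ideal.ideal_prod_eq I
    set I1 := Ideal.map (RingHom.fst A B) I with hI1def
    set I2 := Ideal.map (RingHom.snd A B) I with hI2def
    by_cases h1 : I1 = ⊤ <;> by_cases h2 : I2 = ⊤
    · exact absurd (by rw [hIe, h1, h2, Ideal.prod_top_top]) hI
    · -- I1 = ⊤, I2 proper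
      obtain ⟨m, Q, hm, hQ, hQe⟩ := hB I2 h2
      refine ⟨m, fun k => Ideal.prod (⊤ : Ideal A) (Q k), hm, fun k => ?_, ?_⟩
      · exact IsNOAIdeal.of_isPrime n (Ideal.isPrime_ideal_prod_top' (h := hQ k))
      · rw [hIe, h1, hQe, Ideal.finprod_prod]
        congr 1
        simp [← Ideal.one_eq_top]
    · -- I2 = ⊤, I1 proper
      obtain ⟨m, P, hm, hP, hPe⟩ := hA I1 h1
      refine ⟨m, fun k => Ideal.prod (P k) (⊤ : Ideal B), hm, fun k => ?_, ?_⟩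
      · exact IsNOAIdeal.of_isPrime n (Ideal.isPrime_ideal_prod_top (h := hP k))
      · rw [hIe, h2, hPe, Ideal.finprod_prod]
        congr 1
        simp [← Ideal.one_eq_top]
    · -- both proper
      obtain ⟨m1, P, hm1, hP, hPe⟩ := hA I1 h1
      obtain ⟨m2, Q, hm2, hQ, hQe⟩ := hB I2 h2
      refine ⟨m1 + m2,
        Fin.append (fun j => Ideal.prod (P j) (⊤ : Ideal B))
          (fun k => Ideal.prod (⊤ : Ideal A) (Q k)), by omega, ?_, ?_⟩
      · intro i
        refine Fin.addCases (fun j => ?_) (fun k => ?_) i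
        · rw [Fin.append_left]
          exact IsNOAIdeal.of_isPrime n (Ideal.isPrime_ideal_prod_top (h := hP j))
        · rw [Fin.append_right]
          exact IsNOAIdeal.of_isPrime n (Ideal.isPrime_ideal_prod_top' (h := hQ k))
      · rw [Fin.prod_univ_add]
        simp only [Fin.append_left, Fin.append_right]
        rw [Ideal.finprod_prod, Ideal.finprod_prod, Ideal.prod_mul_prod']
        have e1 : (∏ _i : Fin m1, (⊤ : Ideal B)) = ⊤ := by simp [← Ideal.one_eq_top]
        have e2 : (∏ _i : Fin m2, (⊤ : Ideal A)) = ⊤ := by simp [← Ideal.one_eq_top]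
        rw [e1, e2, Ideal.mul_top, Ideal.top_mul, hIe, hPe, hQe]
end

section
/- A commutative ring R that is not local is a general ZPI-ring if and only if R is an n-OAF ring. -/
/-- A prime ideal is an `n`-OA ideal. -/
lemma Ideal.IsPrime.isNOAIdeal {R : Type*} [CommRing R] {I : Ideal R} (h : I.IsPrime) (n : ℕ) :
    IsNOAIdeal n I := by
  refine ⟨h.ne_top, fun a _ hprod => ?_⟩
  have : ∃ i ∈ Finset.univ, a i ∈ I := Ideal.IsPrime.prod_mem_iff.mp hprod
  obtain ⟨i, -, hi⟩ := this
  by_cases hlast : i = Fin.last n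
  · exact Or.inr (hlast ▸ hi)
  · left
    obtain ⟨j, rfl⟩ := Fin.exists_castSucc_eq.mpr hlast
    obtain ⟨c, hc⟩ := Finset.dvd_prod_of_mem (fun k : Fin n => a k.castSucc)
      (Finset.mem_univ j)
    rw [hc]
    exact I.mul_mem_right c hi

/-- Snoc form of the `n`-OA condition. -/
lemma IsNOAIdeal.mul_mem {R : Type*} [CommRing R] {n : ℕ} {I : Ideal R}
    (h : IsNOAIdeal n I) (f : Fin n → R) (z : R) (hf : ∀ i, ¬IsUnit (f i))
    (hz : ¬IsUnit z) (hp : (∏ i, f i) * z ∈ I) : (∏ i, f i) ∈ I ∨ z ∈ I := by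
  have := h.2 (Fin.snoc f z) ?_ ?_
  · simpa using this
  · intro i
    refine Fin.lastCases ?_ ?_ i <;> simp [hz, hf]
  · rw [Fin.prod_univ_castSucc]; simpa

lemma IsNOAIdeal.descend {R : Type*} [CommRing R] {m : ℕ} {I : Ideal R} {x y : R}
    (hx : ¬IsUnit x) (hy : ¬IsUnit y) (hxy : IsUnit (x + y))
    (h : IsNOAIdeal (m + 1) I) : IsNOAIdeal m I := by
  refine ⟨h.1, fun a ha hprod => ?_⟩
  rw [Fin.prod_univ_castSucc] at hprod
  set P := ∏ i : Fin m, a i.castSucc with hP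
  set z := a (Fin.last m) with hzdef
  by_cases hzI : z ∈ I
  · exact Or.inr hzI
  left
  have key : ∀ c : R, ¬IsUnit c → P * c ∈ I := by
    intro c hc
    have hmem : (∏ i : Fin (m + 1), (Fin.snoc (fun i => a i.castSucc) c : Fin (m+1) → R) i)
        * z ∈ I := by
      rw [Fin.prod_univ_castSucc]
      simp only [Fin.snoc_castSucc, Fin.snoc_last, ← hP]
      have : P * c * z = P * z * c := by ring
      rw [this]
      exact I.mul_mem_right c hprod
    have := h.mul_mem (Fin.snoc (fun i => a i.castSucc) c) z ?_ (ha _) hmem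
    · rcases this with h1 | h1
      · rw [Fin.prod_univ_castSucc] at h1
        simpa [← hP] using h1
      · exact absurd h1 hzI
    · intro i
      refine Fin.lastCases ?_ ?_ i <;> simp [hc, fun i => ha (Fin.castSucc i)]
  have hsum : P * (x + y) ∈ I := by
    rw [mul_add]; exact I.add_mem (key x hx) (key y hy)
  obtain ⟨v, hv⟩ := hxy.exists_right_inv
  have : P = P * (x + y) * v := by rw [mul_assoc, hv, mul_one]
  rw [this]
  exact I.mul_mem_right v hsum

lemma IsNOAIdeal.one_isPrime {R : Type*} [CommRing R] {I : Ideal R}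
    (h : IsNOAIdeal 1 I) : I.IsPrime := by
  refine ⟨h.1, fun {a b} hab => ?_⟩
  by_cases ha : IsUnit a
  · right
    obtain ⟨v, hv⟩ := ha.exists_left_inv
    have : b = v * (a * b) := by rw [← mul_assoc, hv, one_mul]
    rw [this]; exact I.mul_mem_left v hab
  by_cases hb : IsUnit b
  · left
    obtain ⟨v, hv⟩ := hb.exists_right_inv
    have : a = a * b * v := by rw [mul_assoc, hv, mul_one]
    rw [this]; exact I.mul_mem_right v hab
  have := h.mul_mem (fun _ : Fin 1 => a) b (fun _ => ha) hb (by simpa using hab)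
  simpa using this

lemma IsNOAIdeal.isPrime {R : Type*} [CommRing R] [Nontrivial R] (hnl : ¬IsLocalRing R)
    {n : ℕ} (hn : 0 < n) {I : Ideal R} (h : IsNOAIdeal n I) : I.IsPrime := by
  have hxy : ∃ x y : R, ¬IsUnit x ∧ ¬IsUnit y ∧ IsUnit (x + y) := by
    by_contra hcon
    push_neg at hcon
    exact hnl (IsLocalRing.of_isUnit_or_isUnit_of_isUnit_add fun a b hab => by
      by_contra hn'
      push_neg at hn'
      exact hcon a b hn'.1 hn'.2 hab)
  obtain ⟨x, y, hx, hy, huv⟩ := hxy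
  induction n with
  | zero => omega
  | succ m ih =>
    rcases Nat.eq_zero_or_pos m with rfl | hm
    · exact h.one_isPrime
    · exact ih hm (h.descend hx hy huv)

theorem stmt13 {R : Type*} [CommRing R] [Nontrivial R] (hnl : ¬IsLocalRing R)
    (n : ℕ) (hn : 0 < n) :
    IsGeneralZPIRing R ↔ IsNOAFRing R n := by
  constructor
  · intro hz I hI
    obtain ⟨m, J, hm, hp, hIJ⟩ := hz I hI
    exact ⟨m, J, hm, fun i => (hp i).isNOAIdeal n, hIJ⟩
  · intro hf I hI
    obtain ⟨m, J, hm, hp, hIJ⟩ := hf I hI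
    exact ⟨m, J, hm, fun i => (hp i).isPrime hnl hn, hIJ⟩
end
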